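/- arXiv:1305.0868 — 9 statements merged into one kernel-verified Lean document; each statement's English description precedes it below -/
import Mathlib

section
/- Let F be a field, f, g ∈ F[x₁,…,xₖ] with g ≠ 0. Then g divides f in F[x₁,…,xₖ] if and only if for every i ∈ {1,…,k}, g divides f when both are viewed as univariate polynomials in xᵢ over the field F(x₁,…,x_{i-1},x_{i+1},…,xₖ) of rational functions in the remaining variables. -/
open MvPolynomial

/-- View a multivariate polynomial `f ∈ F[x₁,…,xₖ]` as a univariate polynomial in the
variable `xᵢ` with coefficients in the field `F(x_j : j ≠ i)` of rational functions in
the remaining variables. -/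
noncomputable def asUnivariateIn {F : Type*} [Field F] {k : ℕ} (i : Fin k)
    (f : MvPolynomial (Fin k) F) :
    Polynomial (FractionRing (MvPolynomial {j : Fin k // j ≠ i} F)) :=
  Polynomial.map (algebraMap (MvPolynomial {j : Fin k // j ≠ i} F)
      (FractionRing (MvPolynomial {j : Fin k // j ≠ i} F)))
    ((MvPolynomial.optionEquivLeft F {j : Fin k // j ≠ i})
      (MvPolynomial.rename (Equiv.optionSubtypeNe i).symm f))

private lemma optionEquivLeft_rename_some {F : Type*} [CommSemiring F] {S : Type*}
    (q : MvPolynomial S F) :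
    MvPolynomial.optionEquivLeft F S (MvPolynomial.rename Option.some q) = Polynomial.C q := by
  induction q using MvPolynomial.induction_on with
  | C a => simp [MvPolynomial.optionEquivLeft_C]
  | add p q hp hq => simp only [map_add, hp, hq]
  | mul_X p j hp =>
      simp only [map_mul, MvPolynomial.rename_X, hp, MvPolynomial.optionEquivLeft_X_some]

/-- The ring equivalence underlying `asUnivariateIn` (before passing to fraction field). -/
private noncomputable def toUniv {F : Type*} [Field F] {k : ℕ} (i : Fin k) :
    MvPolynomial (Fin k) F ≃+* Polynomial (MvPolynomial {j : Fin k // j ≠ i} F) :=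
  (MvPolynomial.renameEquiv F (Equiv.optionSubtypeNe i).symm).toRingEquiv.trans
    (MvPolynomial.optionEquivLeft F {j : Fin k // j ≠ i}).toRingEquiv

private lemma asUnivariateIn_eq {F : Type*} [Field F] {k : ℕ} (i : Fin k)
    (f : MvPolynomial (Fin k) F) :
    asUnivariateIn i f = (toUniv i f).map
      (algebraMap (MvPolynomial {j : Fin k // j ≠ i} F)
        (FractionRing (MvPolynomial {j : Fin k // j ≠ i} F))) := rfl

/-- Key step: if a prime power `p^n` divides `g` and, for all `i`,
`asUnivariateIn i g ∣ asUnivariateIn i f`, then `p^n ∣ f`. -/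
private lemma prime_pow_dvd {F : Type*} [Field F] {k : ℕ}
    (f g : MvPolynomial (Fin k) F) (hf : f ≠ 0)
    (H : ∀ i : Fin k, asUnivariateIn i g ∣ asUnivariateIn i f)
    (p : MvPolynomial (Fin k) F) (hp : Prime p) (n : ℕ) (hdvd : p ^ n ∣ g) :
    p ^ n ∣ f := by
  classical
  -- `p` involves some variable `i`
  obtain ⟨i, hi⟩ : ∃ i, i ∈ p.vars := by
    rcases p.vars.eq_empty_or_nonempty with hv | ⟨i, hi⟩
    · exfalso
      obtain ⟨q, hq⟩ := p.exists_rename_eq_of_vars_subset_range (Empty.elim : Empty → Fin k)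
        (fun a => a.elim) (by simp [hv])
      rw [MvPolynomial.eq_C_of_isEmpty q] at hq
      rw [MvPolynomial.rename_C] at hq
      rcases eq_or_ne (q.coeff 0) 0 with h0 | h0
      · exact hp.ne_zero (by rw [← hq, h0, map_zero])
      · exact hp.not_isUnit (hq ▸ (isUnit_iff_ne_zero.mpr h0).map MvPolynomial.C)
    · exact ⟨i, hi⟩
  set R := MvPolynomial {j : Fin k // j ≠ i} F with hR
  letI : NormalizationMonoid R := UniqueFactorizationMonoid.normalizationMonoid.toNormalizationMonoid
  letI : NormalizedGCDMonoid R := UniqueFactorizationMonoid.toNormalizedGCDMonoid R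
  set K := FractionRing R with hK
  set ι := algebraMap R K with hι
  have hιinj : Function.Injective ι := IsFractionRing.injective R K
  set e := toUniv (F := F) i with he
  -- `e p` is prime
  have hPprime : Prime (e p) := (MulEquiv.prime_iff e.toMulEquiv).mpr hp
  -- `e p` is primitive
  have hprim : (e p).IsPrimitive := by
    intro r hr
    obtain ⟨q, hq⟩ := hr
    rcases hPprime.irreducible.isUnit_or_isUnit hq with h | h
    · exact Polynomial.isUnit_C.mp h
    · exfalso
      obtain ⟨u, hu, huq⟩ := Polynomial.isUnit_iff.mp h
      have hC : e p = Polynomial.C (r * u) := by rw [map_mul, hq, ← huq]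
      -- then `p` would not involve the variable `i`
      have hcomp : ((Equiv.optionSubtypeNe i).symm ∘ ⇑(Equiv.optionSubtypeNe i) ∘ Option.some)
          = Option.some := by
        funext j
        simp only [Function.comp_apply, Equiv.symm_apply_apply]
      have hp2 : p = MvPolynomial.rename (Equiv.optionSubtypeNe i)
          (MvPolynomial.rename Option.some (r * u)) := by
        apply e.injective
        rw [hC, he, toUniv]
        simp only [RingEquiv.trans_apply, AlgEquiv.toRingEquiv_eq_coe, AlgEquiv.coe_ringEquiv,
          MvPolynomial.renameEquiv_apply, MvPolynomial.rename_rename]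
        rw [hcomp]
        exact (optionEquivLeft_rename_some _).symm
      rw [MvPolynomial.rename_rename] at hp2
      rw [hp2] at hi
      obtain ⟨j, _, hj⟩ := MvPolynomial.mem_vars_rename _ _ hi
      simp only [Function.comp_apply, Equiv.optionSubtypeNe_some] at hj
      exact j.2 hj
  have hprimn : ∀ m : ℕ, ((e p) ^ m).IsPrimitive := by
    intro m
    induction m with
    | zero => simpa using Polynomial.isPrimitive_one
    | succ m ih => rw [pow_succ]; exact ih.mul hprim
  -- transfer the divisibility hypothesis
  have h1 : ((e p) ^ n).map ι ∣ (e f).map ι := by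
    have hg' : (e p) ^ n ∣ e g := by
      simpa only [map_pow] using map_dvd e hdvd
    exact (Polynomial.map_dvd ι hg').trans (by rw [← asUnivariateIn_eq, ← asUnivariateIn_eq]; exact H i)
  -- pass to the primitive part of `e f`
  have hef : e f ≠ 0 := fun h => hf (by simpa using e.injective (h.trans (map_zero e).symm))
  have hcont : (e f).content ≠ 0 := fun h => hef (Polynomial.content_eq_zero_iff.mp h)
  have hcu : IsUnit (Polynomial.C (ι ((e f).content)) : Polynomial K) :=
    Polynomial.isUnit_C.mpr (isUnit_iff_ne_zero.mpr fun h =>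
      hcont (hιinj (by rw [h, map_zero])))
  have hassoc : Associated ((e f).primPart.map ι) ((e f).map ι) := by
    conv_rhs => rw [(e f).eq_C_content_mul_primPart]
    rw [Polynomial.map_mul, Polynomial.map_C]
    exact (associated_unit_mul_left _ _ hcu).symm
  have h2 : ((e p) ^ n).map ι ∣ (e f).primPart.map ι :=
    hassoc.symm.dvd_iff_dvd_right.mp h1
  have h3 : (e p) ^ n ∣ (e f).primPart :=
    (hprimn n).dvd_of_fraction_map_dvd_fraction_map h2
  have h4 : (e p) ^ n ∣ e f := h3.trans (e f).primPart_dvd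
  -- transfer back
  have := map_dvd e.symm h4
  simpa only [map_pow, RingEquiv.symm_apply_apply] using this

/-- For `f, g ∈ F[x₁,…,xₖ]` with `g ≠ 0`, `g` divides `f` in the
multivariate polynomial ring iff for every `i`, `g` divides `f` when both are viewed as
univariate polynomials in `xᵢ` over the field of rational functions in the other variables. -/
theorem dvd_iff_forall_dvd_asUnivariate
    {F : Type*} [Field F] {k : ℕ} (f g : MvPolynomial (Fin k) F) (hg : g ≠ 0) :
    g ∣ f ↔ ∀ i : Fin k, asUnivariateIn i g ∣ asUnivariateIn i f := by
  classical
  constructor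
  · rintro ⟨q, rfl⟩ i
    exact ⟨asUnivariateIn i q, by
      simp only [asUnivariateIn_eq, ← Polynomial.map_mul, ← map_mul]⟩
  · intro H
    rcases eq_or_ne f 0 with rfl | hf
    · exact dvd_zero g
    letI : NormalizationMonoid (MvPolynomial (Fin k) F) :=
      UniqueFactorizationMonoid.normalizationMonoid.toNormalizationMonoid
    rw [UniqueFactorizationMonoid.dvd_iff_normalizedFactors_le_normalizedFactors hg hf]
    rw [Multiset.le_iff_count]
    intro p
    by_cases hmem : p ∈ UniqueFactorizationMonoid.normalizedFactors g
    · have hpirr := UniqueFactorizationMonoid.irreducible_of_normalized_factor p hmem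
      have hpnorm := UniqueFactorizationMonoid.normalize_normalized_factor p hmem
      have hpp : Prime p := UniqueFactorizationMonoid.irreducible_iff_prime.mp hpirr
      have key : emultiplicity p g ≤ emultiplicity p f :=
        emultiplicity_le_emultiplicity_iff.mpr fun n hn => prime_pow_dvd f g hf H p hpp n hn
      rw [UniqueFactorizationMonoid.emultiplicity_eq_count_normalizedFactors hpirr hg,
        UniqueFactorizationMonoid.emultiplicity_eq_count_normalizedFactors hpirr hf,
        hpnorm] at key
      exact_mod_cast key
    · simp [Multiset.count_eq_zero_of_notMem hmem]
end

section
/- Let F be a field and f, g ∈ F[x₁,…,xₖ] be nonzero polynomials. Then gcd(f, g) = 1 in F[x₁,…,xₖ] if and only if for every i ∈ {1,…,k}, the polynomials f and g, viewed as univariate polynomials in xᵢ over the field F(x_j : j ≠ i), have gcd equal to 1. -/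
open MvPolynomial

section Aux

variable {F : Type*} [Field F] {k : ℕ}

/-- The ring equivalence underlying `asUnivariateIn` (before mapping to the fraction field). -/
noncomputable def phiAux (i : Fin k) :
    MvPolynomial (Fin k) F ≃+* Polynomial (MvPolynomial {j : Fin k // j ≠ i} F) :=
  ((renameEquiv F (Equiv.optionSubtypeNe i).symm).trans
    (optionEquivLeft F {j : Fin k // j ≠ i})).toRingEquiv

lemma asUniv_eq (i : Fin k) (f : MvPolynomial (Fin k) F) :
    asUnivariateIn i f = (phiAux i f).map (algebraMap _ _) := rfl

lemma asUniv_dvd (i : Fin k) {d f : MvPolynomial (Fin k) F} (h : d ∣ f) :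
    asUnivariateIn i d ∣ asUnivariateIn i f := by
  obtain ⟨e, rfl⟩ := h
  rw [asUniv_eq, asUniv_eq, map_mul, Polynomial.map_mul]
  exact Dvd.intro _ rfl

lemma optionEquivLeft_rename_some_s2 {S : Type*} (r : MvPolynomial S F) :
    optionEquivLeft F S (rename (some : S → Option S) r) = Polynomial.C r := by
  have : (((optionEquivLeft F S : MvPolynomial (Option S) F →+* _).comp
      ((rename (some : S → Option S)).toRingHom)) :
        MvPolynomial S F →+* Polynomial (MvPolynomial S F)) =
      (Polynomial.C : MvPolynomial S F →+* _) := by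
    apply MvPolynomial.ringHom_ext
    · intro a
      simp [optionEquivLeft_C]
    · intro j
      simp [optionEquivLeft_X_some]
  exact congrFun (congrArg (fun h => h.toFun) this) r

end Aux

/-- For nonzero `f, g ∈ F[x₁,…,xₖ]`, `gcd(f,g) = 1` (every common divisor
is a unit) iff for every `i`, the polynomials `f` and `g` viewed as univariate polynomials
in `xᵢ` over `F(x_j : j ≠ i)` have gcd equal to `1`. -/
theorem relPrime_iff_forall_relPrime_asUnivariate
    {F : Type*} [Field F] {k : ℕ} (f g : MvPolynomial (Fin k) F)
    (hf : f ≠ 0) (hg : g ≠ 0) :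
    (∀ d : MvPolynomial (Fin k) F, d ∣ f → d ∣ g → IsUnit d) ↔
      ∀ i : Fin k,
        ∀ d : Polynomial (FractionRing (MvPolynomial {j : Fin k // j ≠ i} F)),
          d ∣ asUnivariateIn i f → d ∣ asUnivariateIn i g → IsUnit d := by
  constructor
  · intro H i d hdf hdg
    classical
    set R := MvPolynomial {j : Fin k // j ≠ i} F with hR
    letI : NormalizationMonoid R := (UniqueFactorizationMonoid.normalizationMonoid (α := R)).toNormalizationMonoid
    letI : NormalizedGCDMonoid R := UniqueFactorizationMonoid.toNormalizedGCDMonoid R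
    set K := FractionRing R with hK
    have hinj : Function.Injective (algebraMap R K) := IsFractionRing.injective _ _
    have hd0 : d ≠ 0 := by
      rintro rfl
      rw [zero_dvd_iff, asUniv_eq] at hdf
      have h0 : phiAux i f = 0 :=
        Polynomial.map_injective _ hinj (by simpa using hdf)
      exact hf (by simpa using (phiAux i).injective (by rw [h0, map_zero]))
    set p := (IsLocalization.integerNormalization (nonZeroDivisors R) d).primPart with hp_def
    have hpprim : p.IsPrimitive := Polynomial.isPrimitive_primPart _
    -- `p.map (algebraMap R K)` divides `d`
    obtain ⟨b, hb⟩ := IsLocalization.integerNormalization_map_to_map (nonZeroDivisors R) d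
    have hb0 : algebraMap R K (b : R) ≠ 0 := fun h =>
      mem_nonZeroDivisors_iff_ne_zero.mp b.2 (hinj (by simp [h]))
    have hnz : IsLocalization.integerNormalization (nonZeroDivisors R) d ≠ 0 :=
      fun h => hd0 (IsFractionRing.integerNormalization_eq_zero_iff.mp h)
    have hc0 : (IsLocalization.integerNormalization (nonZeroDivisors R) d).content ≠ 0 :=
      fun h => hnz (Polynomial.content_eq_zero_iff.mp h)
    have hsm : ((b : R) • d) = Polynomial.C (algebraMap R K (b : R)) * d := by
      rw [Algebra.smul_def]
      congr 1
    have hb' : Polynomial.C (algebraMap R K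
          (IsLocalization.integerNormalization (nonZeroDivisors R) d).content) *
        p.map (algebraMap R K) = Polynomial.C (algebraMap R K (b : R)) * d := by
      rw [← hsm, ← hb]
      conv_rhs => rw [(IsLocalization.integerNormalization (nonZeroDivisors R) d).eq_C_content_mul_primPart]
      rw [Polynomial.map_mul, Polynomial.map_C]
    have hbu : IsUnit (Polynomial.C (algebraMap R K (b : R))) :=
      Polynomial.isUnit_C.mpr (isUnit_iff_ne_zero.mpr hb0)
    have hpd : p.map (algebraMap R K) ∣ d := by
      have h1 : p.map (algebraMap R K) ∣ Polynomial.C (algebraMap R K (b : R)) * d :=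
        hb' ▸ Dvd.intro_left _ rfl
      exact hbu.dvd_mul_left.mp h1
    -- transfer divisibility from `K[X]` to `R[X]`
    have cancel : ∀ q : Polynomial R, q ≠ 0 →
        p.map (algebraMap R K) ∣ q.map (algebraMap R K) → p ∣ q := by
      intro q hq hdvd
      have hqc : q.content ≠ 0 := fun h => hq (Polynomial.content_eq_zero_iff.mp h)
      have hqmap : q.map (algebraMap R K) = Polynomial.C (algebraMap R K q.content) *
          q.primPart.map (algebraMap R K) := by
        conv_lhs => rw [q.eq_C_content_mul_primPart]
        rw [Polynomial.map_mul, Polynomial.map_C]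
      rw [hqmap] at hdvd
      have hu : IsUnit (Polynomial.C (algebraMap R K q.content)) :=
        Polynomial.isUnit_C.mpr (isUnit_iff_ne_zero.mpr
          (fun h => hqc (hinj (by simpa using h))))
      have h2 : p.map (algebraMap R K) ∣ q.primPart.map (algebraMap R K) :=
        hu.dvd_mul_left.mp hdvd
      exact (hpprim.dvd_of_fraction_map_dvd_fraction_map
        h2).trans q.primPart_dvd
    have hphi_f : phiAux i f ≠ 0 := fun h =>
      hf (by simpa using (phiAux i).injective (by rw [h, map_zero]))
    have hphi_g : phiAux i g ≠ 0 := fun h =>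
      hg (by simpa using (phiAux i).injective (by rw [h, map_zero]))
    have hpf : p ∣ phiAux i f := cancel _ hphi_f (hpd.trans (asUniv_eq i f ▸ hdf))
    have hpg : p ∣ phiAux i g := cancel _ hphi_g (hpd.trans (asUniv_eq i g ▸ hdg))
    -- pull back to the multivariate ring
    have hef : (phiAux i).symm p ∣ f := by
      obtain ⟨q, hq⟩ := hpf
      exact ⟨(phiAux i).symm q, by
        apply (phiAux i).injective
        simp [hq]⟩
    have heg : (phiAux i).symm p ∣ g := by
      obtain ⟨q, hq⟩ := hpg
      exact ⟨(phiAux i).symm q, by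
        apply (phiAux i).injective
        simp [hq]⟩
    have hpu : IsUnit p := by
      have := (H _ hef heg).map (phiAux i)
      simpa using this
    exact Polynomial.isUnit_or_eq_zero_of_isUnit_integerNormalization_primPart hd0 hpu
  · intro H d hdf hdg
    have hd0 : d ≠ 0 := fun h => hf (zero_dvd_iff.mp (h ▸ hdf))
    classical
    have hvars : ∀ i : Fin k, i ∉ d.vars := by
      intro i hi
      have hu : IsUnit (asUnivariateIn i d) :=
        H i _ (asUniv_dvd i hdf) (asUniv_dvd i hdg)
      rw [asUniv_eq] at hu
      have hinj : Function.Injective (algebraMap (MvPolynomial {j : Fin k // j ≠ i} F)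
          (FractionRing (MvPolynomial {j : Fin k // j ≠ i} F))) :=
        IsFractionRing.injective _ _
      have hdeg : (phiAux i d).natDegree = 0 := by
        rw [← Polynomial.natDegree_map_eq_of_injective hinj]
        exact Polynomial.natDegree_eq_zero_of_isUnit hu
      obtain ⟨r, hr⟩ := Polynomial.natDegree_eq_zero.mp hdeg
      have key : phiAux i (rename ((Equiv.optionSubtypeNe i : Option _ ≃ Fin k) ∘ some) r) =
          Polynomial.C r := by
        show optionEquivLeft F _ (rename (Equiv.optionSubtypeNe i).symm (rename _ r)) = _
        rw [rename_rename]
        have hcomp : ((Equiv.optionSubtypeNe i).symm ∘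
            ((Equiv.optionSubtypeNe i : Option _ ≃ Fin k) ∘ some)) =
            (some : {j : Fin k // j ≠ i} → Option {j : Fin k // j ≠ i}) := by
          funext j
          exact (Equiv.optionSubtypeNe i).symm_apply_apply (some j)
        rw [hcomp, optionEquivLeft_rename_some_s2]
      have hd : d = rename ((Equiv.optionSubtypeNe i : Option _ ≃ Fin k) ∘ some) r :=
        (phiAux i).injective (by rw [key, hr])
      rw [hd] at hi
      obtain ⟨j, -, hji⟩ := Finset.mem_image.mp (vars_rename _ r hi)
      exact j.2 (by simpa using hji)
    have hC : d = C (d.coeff 0) := by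
      ext m
      rcases eq_or_ne m 0 with rfl | hm
      · simp
      · rw [coeff_C, if_neg (fun h => hm h.symm)]
        by_contra hne
        obtain ⟨x, hx⟩ := Finsupp.ne_iff.mp hm
        exact hvars x ((mem_vars x).mpr ⟨m, mem_support_iff.mpr hne,
          Finsupp.mem_support_iff.mpr (by simpa using hx)⟩)
    have hc0 : d.coeff 0 ≠ 0 := fun h => hd0 (by rw [hC, h, map_zero])
    exact hC ▸ (isUnit_iff_ne_zero.mpr hc0).map (C : F →+* MvPolynomial (Fin k) F)
end

section
/- Let Q(x₁,…,xₙ) be a nonzero multivariate polynomial of total degree d over a field F, let S ⊆ F be a finite nonempty set, and let r₁,…,rₙ be chosen independently and uniformly at random from S. Then the probability that Q(r₁,…,rₙ) = 0 is at most d/|S|. -/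
open MvPolynomial Finset

lemma totalDegree_fin_zero {F : Type*} [Field F] (p : MvPolynomial (Fin 0) F) :
    p.totalDegree = 0 := by
  obtain ⟨a, rfl⟩ := MvPolynomial.C_surjective (Fin 0) p
  exact MvPolynomial.totalDegree_C a

/-- **Schwartz–Zippel.** Let `Q` be a nonzero multivariate polynomial of
total degree `d` over a field `F`, and `S ⊆ F` a finite nonempty set. Then the number of
tuples `r ∈ Sⁿ` with `Q(r) = 0` is at most `d·|S|^{n-1}`; equivalently, the probability
that a uniformly random `r ∈ Sⁿ` is a zero of `Q` is at most `d/|S|`. -/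
theorem schwartz_zippel
    {F : Type*} [Field F] [DecidableEq F] {n : ℕ}
    (Q : MvPolynomial (Fin n) F) (hQ : Q ≠ 0) (S : Finset F) (hS : S.Nonempty) :
    ((Fintype.piFinset fun _ : Fin n => S).filter
        (fun r : Fin n → F => MvPolynomial.eval r Q = 0)).card
      ≤ Q.totalDegree * S.card ^ (n - 1) := by
  induction n with
  | zero =>
      obtain ⟨a, rfl⟩ := MvPolynomial.C_surjective (Fin 0) Q
      have ha : a ≠ 0 := fun h => hQ (by simp [h])
      have : ((Fintype.piFinset fun _ : Fin 0 => S).filter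
          (fun r : Fin 0 → F => MvPolynomial.eval r (MvPolynomial.C a) = 0)) = ∅ := by
        ext r; simp [ha]
      simp [this, ha]
  | succ n ih =>
      set P : Polynomial (MvPolynomial (Fin n) F) := MvPolynomial.finSuccEquiv F n Q with hP
      have hPne : P ≠ 0 := by
        simpa [hP] using (map_ne_zero_iff _ (MvPolynomial.finSuccEquiv F n).injective).mpr hQ
      set k : ℕ := P.natDegree with hk
      set L : MvPolynomial (Fin n) F := P.leadingCoeff with hL
      have hLne : L ≠ 0 := by simpa [hL, Polynomial.leadingCoeff_ne_zero] using hPne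
      have hdeg : L.totalDegree + k ≤ Q.totalDegree := by
        have := MvPolynomial.totalDegree_coeff_finSuccEquiv_add_le Q k
          hLne
        exact this
      -- decompose the count as a sum over the tail
      have key : ((Fintype.piFinset fun _ : Fin (n + 1) => S).filter
            (fun r : Fin (n + 1) → F => MvPolynomial.eval r Q = 0)).card
          = ∑ s ∈ Fintype.piFinset (fun _ : Fin n => S),
              (S.filter fun y => MvPolynomial.eval (Fin.cons y s) Q = 0).card := by
        rw [← Finset.card_sigma]
        apply Finset.card_nbij' (fun r => ⟨Fin.tail r, r 0⟩)
          (fun p => Fin.cons p.2 p.1)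
        · intro r hr
          simp only [Finset.mem_coe, Finset.mem_filter, Fintype.mem_piFinset] at hr
          simp only [Finset.mem_coe, Finset.mem_sigma, Fintype.mem_piFinset, Finset.mem_filter]
          refine ⟨fun i => hr.1 _, hr.1 0, ?_⟩
          simpa [Fin.cons_self_tail] using hr.2
        · rintro ⟨s, y⟩ hp
          simp only [Finset.mem_coe, Finset.mem_sigma, Fintype.mem_piFinset, Finset.mem_filter] at hp
          simp only [Finset.mem_coe, Finset.mem_filter, Fintype.mem_piFinset]
          exact ⟨fun i => Fin.cases hp.2.1 (fun j => hp.1 j) i, hp.2.2⟩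
        · intro r _; simp [Fin.cons_self_tail]
        · rintro ⟨s, y⟩ _; simp
      rw [key]
      -- split according to whether the leading coefficient vanishes
      have hsplit := Finset.sum_filter_add_sum_filter_not
        (Fintype.piFinset (fun _ : Fin n => S))
        (fun s => MvPolynomial.eval s L = 0)
        (fun s => (S.filter fun y => MvPolynomial.eval (Fin.cons y s) Q = 0).card)
      rw [← hsplit]
      have hbad : ∑ s ∈ (Fintype.piFinset (fun _ : Fin n => S)).filter
            (fun s => MvPolynomial.eval s L = 0),
            (S.filter fun y => MvPolynomial.eval (Fin.cons y s) Q = 0).card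
          ≤ (L.totalDegree * S.card ^ (n - 1)) * S.card := by
        calc _ ≤ ∑ _s ∈ (Fintype.piFinset (fun _ : Fin n => S)).filter
              (fun s => MvPolynomial.eval s L = 0), S.card :=
              Finset.sum_le_sum fun s _ => Finset.card_filter_le _ _
          _ = ((Fintype.piFinset (fun _ : Fin n => S)).filter
              (fun s => MvPolynomial.eval s L = 0)).card * S.card := by
              rw [Finset.sum_const, smul_eq_mul]
          _ ≤ (L.totalDegree * S.card ^ (n - 1)) * S.card :=
              Nat.mul_le_mul_right _ (ih L hLne)
      have hgood : ∑ s ∈ (Fintype.piFinset (fun _ : Fin n => S)).filter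
            (fun s => ¬ MvPolynomial.eval s L = 0),
            (S.filter fun y => MvPolynomial.eval (Fin.cons y s) Q = 0).card
          ≤ S.card ^ n * k := by
        calc _ ≤ ∑ _s ∈ (Fintype.piFinset (fun _ : Fin n => S)).filter
              (fun s => ¬ MvPolynomial.eval s L = 0), k := by
              apply Finset.sum_le_sum
              intro s hs
              simp only [Finset.mem_filter] at hs
              set p : Polynomial F := P.map (MvPolynomial.eval s) with hp
              have hpne : p ≠ 0 := by
                intro h
                apply hs.2
                have hc : p.coeff k = MvPolynomial.eval s L := by
                  rw [hp, Polynomial.coeff_map]; rfl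
                rw [h, Polynomial.coeff_zero] at hc
                exact hc.symm
              have hsub : (S.filter fun y => MvPolynomial.eval (Fin.cons y s) Q = 0)
                  ⊆ p.roots.toFinset := by
                intro y hy
                simp only [Finset.mem_filter] at hy
                rw [Multiset.mem_toFinset, Polynomial.mem_roots hpne]
                have := MvPolynomial.eval_eq_eval_mv_eval' s y Q
                rw [hy.2] at this
                exact (Polynomial.IsRoot.def).mpr (by rw [hp, hP, ← this])
              calc (S.filter fun y => MvPolynomial.eval (Fin.cons y s) Q = 0).card
                  ≤ p.roots.toFinset.card := Finset.card_le_card hsub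
                _ ≤ Multiset.card p.roots := Multiset.toFinset_card_le _
                _ ≤ p.natDegree := Polynomial.card_roots' p
                _ ≤ k := Polynomial.natDegree_map_le
          _ ≤ S.card ^ n * k := by
              rw [Finset.sum_const, smul_eq_mul]
              apply Nat.mul_le_mul_right
              calc _ ≤ (Fintype.piFinset (fun _ : Fin n => S)).card :=
                    Finset.card_filter_le _ _
                _ = S.card ^ n := by simp [Fintype.card_piFinset]
      have hpow : (L.totalDegree * S.card ^ (n - 1)) * S.card ≤ L.totalDegree * S.card ^ n := by
        cases n with
        | zero => simp [totalDegree_fin_zero L]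
        | succ m =>
            rw [mul_assoc, Nat.succ_sub_one, ← pow_succ]
      calc _ ≤ (L.totalDegree * S.card ^ (n - 1)) * S.card + S.card ^ n * k :=
            Nat.add_le_add hbad hgood
        _ ≤ L.totalDegree * S.card ^ n + k * S.card ^ n := by
            rw [mul_comm (S.card ^ n) k]; exact Nat.add_le_add hpow le_rfl
        _ = (L.totalDegree + k) * S.card ^ n := by ring
        _ ≤ Q.totalDegree * S.card ^ (n + 1 - 1) := by
            simpa using Nat.mul_le_mul_right _ hdeg
end

section
/- Let F be a field, and let f₁(y),…,f_r(y) be rational functions in F(y₁,…,yₖ). Let y⁽¹⁾,…,y⁽ʳ⁾ be r disjoint copies of the variable vector y, and let H be the r×r matrix over the rational function field F(y⁽¹⁾,…,y⁽ʳ⁾) whose (j,i)-entry is f_i(y⁽ʲ⁾). Then det(H) ≠ 0 if and only if f₁,…,f_r are linearly independent over F. -/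
open MvPolynomial

namespace Det7

variable {F : Type*} [Field F]

noncomputable def liftHom {σ τ : Type*} (g : σ → τ) (hg : Function.Injective g) :
    FractionRing (MvPolynomial σ F) →+* FractionRing (MvPolynomial τ F) :=
  IsFractionRing.lift (g := (algebraMap (MvPolynomial τ F)
      (FractionRing (MvPolynomial τ F))).comp (rename g).toRingHom)
    (by
      have h1 := IsFractionRing.injective (MvPolynomial τ F) (FractionRing (MvPolynomial τ F))
      have h2 := rename_injective (R := F) g hg
      exact h1.comp h2)

@[simp] lemma liftHom_algebraMap {σ τ : Type*} (g : σ → τ) (hg : Function.Injective g)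
    (p : MvPolynomial σ F) :
    liftHom g hg (algebraMap (MvPolynomial σ F) (FractionRing (MvPolynomial σ F)) p) =
      algebraMap (MvPolynomial τ F) (FractionRing (MvPolynomial τ F)) (rename g p) :=
  IsFractionRing.lift_algebraMap _ _

lemma liftHom_liftHom {σ τ υ : Type*} (g : σ → τ) (hg : Function.Injective g)
    (g' : τ → υ) (hg' : Function.Injective g')
    (x : FractionRing (MvPolynomial σ F)) :
    liftHom g' hg' (liftHom g hg x) = liftHom (g' ∘ g) (hg'.comp hg) x := by
  have : (liftHom (F := F) g' hg').comp (liftHom g hg) = liftHom (g' ∘ g) (hg'.comp hg) := by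
    apply IsLocalization.ringHom_ext (nonZeroDivisors (MvPolynomial σ F))
    ext p <;> simp [RingHom.comp_apply, rename_rename]
  exact RingHom.congr_fun this x


lemma sumToIter_rename_inl {τ σ : Type*} (p : MvPolynomial τ F) :
    sumToIter F τ σ (rename Sum.inl p) = map (C : F →+* MvPolynomial σ F) p := by
  have : (sumToIter F τ σ).comp (rename (Sum.inl : τ → τ ⊕ σ)).toRingHom =
      map (C : F →+* MvPolynomial σ F) := by
    apply ringHom_ext <;> intro a <;>
      simp [RingHom.comp_apply, sumToIter_C, sumToIter_Xl, map_C, map_X]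
  exact RingHom.congr_fun this p

lemma sumToIter_rename_inr {τ σ : Type*} (p : MvPolynomial σ F) :
    sumToIter F τ σ (rename Sum.inr p) = (C : MvPolynomial σ F →+* _) p := by
  have : (sumToIter F τ σ).comp (rename (Sum.inr : σ → τ ⊕ σ)).toRingHom =
      (C : MvPolynomial σ F →+* MvPolynomial τ (MvPolynomial σ F)) := by
    apply ringHom_ext <;> intro a <;>
      simp [RingHom.comp_apply, sumToIter_C, sumToIter_Xr]
  exact RingHom.congr_fun this p

/-- Common-denominator representation for a finite family in a fraction ring. -/
lemma common_denom {σ : Type*} {s : ℕ} (f : Fin s → FractionRing (MvPolynomial σ F)) :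
    ∃ (N : Fin s → MvPolynomial σ F) (D : MvPolynomial σ F), D ≠ 0 ∧
      ∀ i, f i * algebraMap (MvPolynomial σ F) (FractionRing (MvPolynomial σ F)) D =
        algebraMap (MvPolynomial σ F) (FractionRing (MvPolynomial σ F)) (N i) := by
  classical
  have h : ∀ i, ∃ (n d : MvPolynomial σ F), d ≠ 0 ∧
      f i * algebraMap _ _ d = algebraMap _ _ n := by
    intro i
    obtain ⟨⟨n, d⟩, hd⟩ := IsLocalization.surj (nonZeroDivisors (MvPolynomial σ F)) (f i)
    exact ⟨n, d, mem_nonZeroDivisors_iff_ne_zero.mp d.2, hd⟩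
  choose n d hd hnd using h
  refine ⟨fun i => n i * ∏ j ∈ Finset.univ.erase i, d j, ∏ j, d j,
    Finset.prod_ne_zero_iff.mpr fun j _ => hd j, fun i => ?_⟩
  rw [← Finset.mul_prod_erase Finset.univ d (Finset.mem_univ i)]
  rw [map_mul, map_mul, ← mul_assoc, hnd i]


set_option maxHeartbeats 1000000 in
set_option synthInstance.maxHeartbeats 400000 in
lemma keyA {σ τ υ : Type*} (g₁ : τ → υ) (g₂ : σ → υ)
    (h₁ : Function.Injective g₁) (h₂ : Function.Injective g₂)
    (hinj : Function.Injective (Sum.elim g₁ g₂))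
    {s : ℕ} (f : Fin s → FractionRing (MvPolynomial σ F))
    (hf : ∀ a : Fin s → F,
      (∑ i, algebraMap (MvPolynomial σ F) (FractionRing (MvPolynomial σ F))
        (C (a i)) * f i) = 0 → a = 0)
    (c : Fin s → FractionRing (MvPolynomial τ F))
    (h : ∑ i, liftHom g₁ h₁ (c i) * liftHom g₂ h₂ (f i) = 0) : c = 0 := by
  classical
  obtain ⟨N, D, hD, hND⟩ := common_denom f
  obtain ⟨P, Q, hQ, hPQ⟩ := common_denom c
  -- Clear denominators: equation in (MvPolynomial υ F)
  have hsum : (∑ i, rename g₁ (P i) * rename g₂ (N i) : (MvPolynomial υ F)) = 0 := by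
    apply IsFractionRing.injective (MvPolynomial υ F) (FractionRing (MvPolynomial υ F))
    rw [map_sum, map_zero]
    have : ∀ i, algebraMap (MvPolynomial υ F) (FractionRing (MvPolynomial υ F)) (rename g₁ (P i) * rename g₂ (N i)) =
        (liftHom g₁ h₁ (c i) * liftHom g₂ h₂ (f i)) *
          (liftHom g₁ h₁ (algebraMap (MvPolynomial τ F) (FractionRing (MvPolynomial τ F)) Q) *
            liftHom g₂ h₂ (algebraMap (MvPolynomial σ F) (FractionRing (MvPolynomial σ F)) D)) := by
      intro i
      rw [map_mul, ← liftHom_algebraMap g₁ h₁, ← liftHom_algebraMap g₂ h₂,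
        ← hPQ i, ← hND i, map_mul, map_mul]
      ring
    simp only [this, ← Finset.sum_mul, h, zero_mul]
  -- transport to the sum type
  have hsum2 : (∑ i, rename (Sum.inl : τ → τ ⊕ σ) (P i) * rename Sum.inr (N i) :
      MvPolynomial (τ ⊕ σ) F) = 0 := by
    apply rename_injective _ hinj
    rw [map_sum, map_zero]
    rw [← hsum]
    refine Finset.sum_congr rfl fun i _ => ?_
    rw [map_mul, rename_rename, rename_rename, Sum.elim_comp_inl, Sum.elim_comp_inr]
  -- apply sumToIter
  have hsum3 : (∑ i, map (C : F →+* MvPolynomial σ F) (P i) * (C : (MvPolynomial σ F) →+* MvPolynomial τ (MvPolynomial σ F)) (N i)) = 0 := by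
    have := congrArg (sumToIter F τ σ) hsum2
    rw [map_sum, map_zero] at this
    rw [← this]
    refine Finset.sum_congr rfl fun i _ => ?_
    rw [map_mul, sumToIter_rename_inl, sumToIter_rename_inr]
  -- extract coefficients
  have hcoeff : ∀ m : τ →₀ ℕ, ∀ i, coeff m (P i) = 0 := by
    intro m
    have hm := congrArg (coeff m) hsum3
    rw [coeff_sum, coeff_zero] at hm
    have hm' : (∑ i, C (coeff m (P i)) * N i : (MvPolynomial σ F)) = 0 := by
      rw [← hm]
      refine Finset.sum_congr rfl fun i _ => ?_
      rw [mul_comm (map (C : F →+* MvPolynomial σ F) (P i)), coeff_C_mul, coeff_map, mul_comm]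
    have := hf (fun i => coeff m (P i)) ?_
    · exact fun i => congrFun this i
    · -- sum relation in K
      have hDK : algebraMap (MvPolynomial σ F) (FractionRing (MvPolynomial σ F)) D ≠ 0 := fun hc =>
        hD (IsFractionRing.injective (MvPolynomial σ F) (FractionRing (MvPolynomial σ F)) (by rw [hc, map_zero]))
      have : (∑ i, algebraMap (MvPolynomial σ F) (FractionRing (MvPolynomial σ F)) (C (coeff m (P i))) * f i) *
          algebraMap (MvPolynomial σ F) (FractionRing (MvPolynomial σ F)) D = 0 := by
        rw [Finset.sum_mul]
        have : ∀ i, algebraMap (MvPolynomial σ F) (FractionRing (MvPolynomial σ F)) (C (coeff m (P i))) * f i *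
            algebraMap (MvPolynomial σ F) (FractionRing (MvPolynomial σ F)) D =
            algebraMap (MvPolynomial σ F) (FractionRing (MvPolynomial σ F)) (C (coeff m (P i)) * N i) := by
          intro i
          rw [map_mul, mul_assoc, hND i]
        simp only [this, ← map_sum, hm', map_zero]
      rcases mul_eq_zero.mp this with h' | h'
      · exact h'
      · exact absurd h' hDK
  have hP : ∀ i, P i = 0 := fun i => MvPolynomial.ext _ _ fun m => by
    rw [hcoeff m i, coeff_zero]
  funext i
  have hQK : algebraMap (MvPolynomial τ F) (FractionRing (MvPolynomial τ F)) Q ≠ 0 := fun hc =>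
    hQ (IsFractionRing.injective (MvPolynomial τ F) (FractionRing (MvPolynomial τ F)) (by rw [hc, map_zero]))
  have := hPQ i
  rw [hP i, map_zero] at this
  rcases mul_eq_zero.mp this with h' | h'
  · exact h'
  · exact absurd h' hQK


lemma indep_comp {σ : Type*} {s r : ℕ} (f : Fin r → FractionRing (MvPolynomial σ F))
    (hf : ∀ a : Fin r → F,
      (∑ i, algebraMap (MvPolynomial σ F) (FractionRing (MvPolynomial σ F))
        (C (a i)) * f i) = 0 → a = 0)
    (h : Fin s → Fin r) (hh : Function.Injective h) :
    ∀ a : Fin s → F,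
      (∑ i, algebraMap (MvPolynomial σ F) (FractionRing (MvPolynomial σ F))
        (C (a i)) * f (h i)) = 0 → a = 0 := by
  classical
  intro a ha
  have key : (∑ j, algebraMap (MvPolynomial σ F) (FractionRing (MvPolynomial σ F))
      (C (Function.extend h a 0 j)) * f j) = 0 := by
    rw [← Finset.sum_subset (Finset.subset_univ (Finset.univ.image h))]
    · rw [Finset.sum_image (fun x _ y _ hxy => hh hxy)]
      rw [← ha]
      refine Finset.sum_congr rfl fun i _ => ?_
      rw [hh.extend_apply]
    · intro j _ hj
      have : Function.extend h a 0 j = 0 := by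
        apply Function.extend_apply'
        rintro ⟨i, rfl⟩
        exact hj (Finset.mem_image_of_mem h (Finset.mem_univ i))
      rw [this, map_zero, map_zero, zero_mul]
  have h0 := hf _ key
  funext i
  have := congrFun h0 (h i)
  rwa [hh.extend_apply] at this

lemma copy_inj {r k : ℕ} (j : Fin r) : Function.Injective (fun l : Fin k => (j, l)) :=
  fun a b hab => by simpa using congrArg Prod.snd hab

set_option maxHeartbeats 1600000 in
set_option synthInstance.maxHeartbeats 400000 in
lemma main_det {k : ℕ} : ∀ (r : ℕ) (f : Fin r → FractionRing (MvPolynomial (Fin k) F)),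
    (∀ a : Fin r → F,
      (∑ i, algebraMap (MvPolynomial (Fin k) F) (FractionRing (MvPolynomial (Fin k) F))
        (C (a i)) * f i) = 0 → a = 0) →
    (Matrix.of fun j i : Fin r => liftHom (fun l : Fin k => (j, l)) (copy_inj j) (f i)).det ≠ 0 := by
  intro r
  induction r with
  | zero => intro f _; simp [Matrix.det_fin_zero]
  | succ r IH =>
    intro f hf hdet
    classical
    -- cofactors
    set g₁ : Fin r × Fin k → Fin (r + 1) × Fin k := Prod.map Fin.castSucc id with hg₁def
    have hg₁ : Function.Injective g₁ :=
      Function.Injective.prodMap (Fin.castSucc_injective r) (fun a b => id)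
    set glast : Fin k → Fin (r + 1) × Fin k := fun l => (Fin.last r, l) with hglastdef
    have hglast : Function.Injective glast := copy_inj (Fin.last r)
    set M := (Matrix.of fun j i : Fin (r + 1) =>
      liftHom (fun l : Fin k => (j, l)) (copy_inj j) (f i)) with hMdef
    set c : Fin (r + 1) → FractionRing (MvPolynomial (Fin r × Fin k) F) := fun i =>
      (-1) ^ ((r : ℕ) + (i : ℕ)) *
        (Matrix.of fun j i' : Fin r =>
          liftHom (fun l : Fin k => (j, l)) (copy_inj j) (f (i.succAbove i'))).det with hcdef
    have hlift : ∀ (x : FractionRing (MvPolynomial (Fin k) F)) (j : Fin r),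
        liftHom g₁ hg₁ (liftHom (fun l : Fin k => (j, l)) (copy_inj j) x) =
          liftHom (fun l : Fin k => (j.castSucc, l)) (copy_inj j.castSucc) x := by
      intro x j
      rw [liftHom_liftHom]
      rfl
    -- image of cofactors
    have hcim : ∀ i : Fin (r + 1), liftHom g₁ hg₁ (c i) =
        (-1) ^ ((r : ℕ) + (i : ℕ)) * (M.submatrix Fin.castSucc i.succAbove).det := by
      intro i
      simp only [hcdef]
      rw [map_mul, map_pow, map_neg, map_one]
      congr 1
      rw [RingHom.map_det]
      congr 1
      ext j i'
      simp only [Matrix.map_apply, Matrix.of_apply, Matrix.submatrix_apply, hMdef]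
      exact hlift (f (i.succAbove i')) j
    -- the linear relation from det = 0
    have hrel : ∑ i, liftHom g₁ hg₁ (c i) * liftHom glast hglast (f i) = 0 := by
      calc ∑ i, liftHom g₁ hg₁ (c i) * liftHom glast hglast (f i)
          = ∑ i : Fin (r + 1), (-1) ^ (((Fin.last r) : ℕ) + (i : ℕ)) * M (Fin.last r) i *
            (M.submatrix (Fin.last r).succAbove i.succAbove).det := by
            refine Finset.sum_congr rfl fun i _ => ?_
            rw [hcim i, Fin.succAbove_last, Fin.val_last]
            have hMl : liftHom glast hglast (f i) = M (Fin.last r) i := rfl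
            rw [hMl]; ring
        _ = M.det := (Matrix.det_succ_row M (Fin.last r)).symm
        _ = 0 := hdet
    -- injectivity of the combined variable map
    have hSum : Function.Injective (Sum.elim g₁ glast) := by
      rintro (⟨j, l⟩ | l) (⟨j', l'⟩ | l') hxy <;>
        simp only [Sum.elim_inl, Sum.elim_inr, hg₁def, hglastdef, Prod.map_apply, id_eq,
          Prod.mk.injEq] at hxy
      · rw [Fin.castSucc_injective r hxy.1, hxy.2]
      · exact absurd hxy.1 (Fin.castSucc_lt_last j).ne
      · exact absurd hxy.1.symm (Fin.castSucc_lt_last j').ne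
      · rw [hxy.2]
    have hc0 := keyA g₁ glast hg₁ hglast hSum f hf c hrel
    have hlast : c (Fin.last r) ≠ 0 := by
      simp only [hcdef]
      apply mul_ne_zero
      · exact pow_ne_zero _ (neg_ne_zero.mpr one_ne_zero)
      · have hind : ∀ a : Fin r → F,
            (∑ i, algebraMap (MvPolynomial (Fin k) F) (FractionRing (MvPolynomial (Fin k) F))
              (C (a i)) * f (Fin.castSucc i)) = 0 → a = 0 :=
          indep_comp f hf Fin.castSucc (Fin.castSucc_injective r)
        have hIH := IH (fun i => f (Fin.castSucc i)) hind
        simpa only [Fin.succAbove_last] using hIH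
    exact hlast (congrFun hc0 (Fin.last r))

end Det7


set_option maxHeartbeats 1000000
set_option synthInstance.maxHeartbeats 400000

/-- Let `f₁,…,f_r ∈ F(y₁,…,yₖ)` be rational functions, written as
`f_i = num_i / den_i`. Let `H` be the `r×r` matrix over `F(y⁽¹⁾,…,y⁽ʳ⁾)` (rational
functions in `r` disjoint fresh copies of the variables) whose `(j,i)` entry is
`f_i(y⁽ʲ⁾)`, obtained by renaming the variables `y_l ↦ y_{(j,l)}` in `num_i, den_i`.
Then `det H ≠ 0` iff `f₁,…,f_r` are linearly independent over `F`. -/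
theorem det_ne_zero_iff_linearIndependent
    {F : Type*} [Field F] {k r : ℕ}
    (f : Fin r → FractionRing (MvPolynomial (Fin k) F))
    (num den : Fin r → MvPolynomial (Fin k) F)
    (hden : ∀ i, den i ≠ 0)
    (hf : ∀ i, f i =
      algebraMap (MvPolynomial (Fin k) F) (FractionRing (MvPolynomial (Fin k) F)) (num i) /
      algebraMap (MvPolynomial (Fin k) F) (FractionRing (MvPolynomial (Fin k) F)) (den i)) :
    (Matrix.det (Matrix.of fun j i : Fin r =>
        (algebraMap (MvPolynomial (Fin r × Fin k) F)
            (FractionRing (MvPolynomial (Fin r × Fin k) F))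
            (MvPolynomial.rename (fun l => (j, l)) (num i))) /
        (algebraMap (MvPolynomial (Fin r × Fin k) F)
            (FractionRing (MvPolynomial (Fin r × Fin k) F))
            (MvPolynomial.rename (fun l => (j, l)) (den i)))) ≠ 0)
      ↔ ∀ a : Fin r → F,
          (∑ i, algebraMap (MvPolynomial (Fin k) F) (FractionRing (MvPolynomial (Fin k) F))
              (MvPolynomial.C (a i)) * f i) = 0 → a = 0 := by
  classical
  have hM : (Matrix.of fun j i : Fin r =>
        (algebraMap (MvPolynomial (Fin r × Fin k) F)
            (FractionRing (MvPolynomial (Fin r × Fin k) F))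
            (MvPolynomial.rename (fun l => (j, l)) (num i))) /
        (algebraMap (MvPolynomial (Fin r × Fin k) F)
            (FractionRing (MvPolynomial (Fin r × Fin k) F))
            (MvPolynomial.rename (fun l => (j, l)) (den i)))) =
      Matrix.of fun j i : Fin r =>
        Det7.liftHom (fun l : Fin k => (j, l)) (Det7.copy_inj j) (f i) := by
    ext j i
    simp only [Matrix.of_apply]
    rw [hf i, map_div₀, Det7.liftHom_algebraMap, Det7.liftHom_algebraMap]
  rw [hM]
  constructor
  · intro hdet a ha
    by_contra hne
    apply hdet
    rw [← Matrix.exists_mulVec_eq_zero_iff]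
    refine ⟨fun i => algebraMap (MvPolynomial (Fin r × Fin k) F)
        (FractionRing (MvPolynomial (Fin r × Fin k) F)) (C (a i)), ?_, ?_⟩
    · obtain ⟨i, hi⟩ : ∃ i, a i ≠ 0 := by
        by_contra h0
        push_neg at h0
        exact hne (funext h0)
      intro hv
      apply hi
      have h1 := congrFun hv i
      simp only [Pi.zero_apply] at h1
      have h2 := (IsFractionRing.to_map_eq_zero_iff
        (K := FractionRing (MvPolynomial (Fin r × Fin k) F))).mp h1
      exact (MvPolynomial.C_injective (Fin r × Fin k) F) (by rw [h2, MvPolynomial.C_0])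
    · funext j
      have hterm : ∀ i, Det7.liftHom (fun l : Fin k => (j, l)) (Det7.copy_inj j) (f i) *
          algebraMap (MvPolynomial (Fin r × Fin k) F)
            (FractionRing (MvPolynomial (Fin r × Fin k) F)) (C (a i)) =
          Det7.liftHom (fun l : Fin k => (j, l)) (Det7.copy_inj j)
            (algebraMap (MvPolynomial (Fin k) F) (FractionRing (MvPolynomial (Fin k) F))
              (C (a i)) * f i) := by
        intro i
        rw [map_mul, Det7.liftHom_algebraMap, rename_C, mul_comm]
      simp only [Matrix.mulVec, dotProduct, Matrix.of_apply, hterm, ← map_sum, ha,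
        map_zero, Pi.zero_apply]
  · intro hind
    exact Det7.main_det r f hind
end

section
/- Let K be a field and let C and D be (n+1)×n matrices over K, each of rank n. Then the solution space of the equation r(z)·(zC − D) = 0, where r(z) ranges over row vectors with entries in K(z), is a one-dimensional K(z)-subspace; moreover it is spanned by a vector of the form (1, z, z², …, zⁿ)·F for some (n+1)×(n+1) matrix F over K. -/
set_option maxHeartbeats 1000000
set_option synthInstance.maxHeartbeats 400000

open Polynomial Matrix

/-- Let `C, D` be `(n+1)×n` matrices over a field `K`, each of rank `n`.
Then the left kernel of `zC − D` over `K(z)` — the space of row vectors `r(z)` with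
`r(z)·(zC − D) = 0` — is a one-dimensional `K(z)`-subspace, spanned by a vector of the
form `(1, z, …, zⁿ)·F` for some `(n+1)×(n+1)` matrix `F` over `K`. -/
theorem left_kernel_one_dimensional
    {K : Type*} [Field K] (n : ℕ)
    (C D : Matrix (Fin (n + 1)) (Fin n) K)
    (hC : C.rank = n) (hD : D.rank = n) :
    ∃ (F : Matrix (Fin (n + 1)) (Fin (n + 1)) K) (r₀ : Fin (n + 1) → RatFunc K),
      (r₀ = fun j => ∑ i : Fin (n + 1), RatFunc.X ^ (i : ℕ) * RatFunc.C (F i j)) ∧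
      r₀ ≠ 0 ∧
      Matrix.vecMul r₀
        (Matrix.of fun i j =>
          (RatFunc.X : RatFunc K) * RatFunc.C (C i j) - RatFunc.C (D i j)) = 0 ∧
      ∀ r : Fin (n + 1) → RatFunc K,
        Matrix.vecMul r
          (Matrix.of fun i j =>
            (RatFunc.X : RatFunc K) * RatFunc.C (C i j) - RatFunc.C (D i j)) = 0 →
        ∃ c : RatFunc K, r = fun j => c * r₀ j := by
  classical
  set φ : Polynomial K →+* RatFunc K := (algebraMap (Polynomial K) (RatFunc K)) with hφ
  have hφinj : Function.Injective φ := IsFractionRing.injective _ _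
  set P : Matrix (Fin (n+1)) (Fin n) (Polynomial K) :=
    Matrix.of fun i j => Polynomial.X * Polynomial.C (C i j) - Polynomial.C (D i j) with hP
  set M : Matrix (Fin (n+1)) (Fin n) (RatFunc K) :=
    Matrix.of fun i j => (RatFunc.X : RatFunc K) * RatFunc.C (C i j) - RatFunc.C (D i j) with hM
  have hPM : P.map φ = M := by
    ext i j
    show φ (Polynomial.X * Polynomial.C (C i j) - Polynomial.C (D i j)) = _
    rw [map_sub, _root_.map_mul, RatFunc.algebraMap_X, RatFunc.algebraMap_C,
      RatFunc.algebraMap_C]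
    rfl
  -- a nonzero left-kernel vector of C over K
  have hCTrank : Cᵀ.rank = n := by rw [Matrix.rank_transpose]; exact hC
  have hker_ne : LinearMap.ker (Cᵀ.mulVecLin) ≠ ⊥ := by
    intro h
    have h1 : Cᵀ.rank = Module.finrank K (Fin (n+1) → K) :=
      LinearMap.finrank_range_of_inj (LinearMap.ker_eq_bot.mp h)
    rw [hCTrank, Module.finrank_pi, Fintype.card_fin] at h1
    omega
  obtain ⟨u, hu_mem, hu_ne⟩ := Submodule.ne_bot_iff _ |>.mp hker_ne
  have hu : Matrix.vecMul u C = 0 := by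
    have := LinearMap.mem_ker.mp hu_mem
    rwa [Matrix.mulVecLin_apply, Matrix.mulVec_transpose] at this
  obtain ⟨j₀, hj₀⟩ : ∃ j₀, u j₀ ≠ 0 := Function.ne_iff.mp hu_ne
  -- C has injective mulVec
  have hCinj : Function.Injective C.mulVecLin := by
    rw [← LinearMap.ker_eq_bot]
    have h2 := LinearMap.finrank_range_add_finrank_ker C.mulVecLin
    have h3 : Module.finrank K (LinearMap.range C.mulVecLin) = n := hC
    rw [h3, Module.finrank_pi, Fintype.card_fin] at h2
    exact Submodule.finrank_eq_zero.mp (by omega)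
  -- the square submatrix of C deleting row j₀ is invertible
  set C₀ : Matrix (Fin n) (Fin n) K := C.submatrix j₀.succAbove id with hC₀def
  set D₀ : Matrix (Fin n) (Fin n) K := D.submatrix j₀.succAbove id with hD₀def
  have hkey : ∀ a : Fin n → K, C₀.mulVec a = 0 → a = 0 := by
    intro a ha
    have hy' : ∀ i, (C.mulVec a) (j₀.succAbove i) = 0 := by
      intro i
      have := congrFun ha i
      simpa [hC₀def, Matrix.mulVec, Matrix.submatrix_apply, dotProduct] using this
    have hdot : u ⬝ᵥ (C.mulVec a) = 0 := by
      rw [Matrix.dotProduct_mulVec, hu, zero_dotProduct]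
    have hjj : (C.mulVec a) j₀ = 0 := by
      have hsum : u ⬝ᵥ C.mulVec a = u j₀ * (C.mulVec a) j₀ := by
        rw [dotProduct]
        refine Finset.sum_eq_single j₀ (fun i _ hij => ?_) (fun h => absurd (Finset.mem_univ _) h)
        obtain ⟨k, rfl⟩ := Fin.exists_succAbove_eq hij
        rw [hy' k, mul_zero]
      rw [hsum] at hdot
      exact (mul_eq_zero.mp hdot).resolve_left hj₀
    have hy : C.mulVec a = 0 := by
      funext i
      rcases eq_or_ne i j₀ with rfl | hij
      · exact hjj
      · obtain ⟨k, rfl⟩ := Fin.exists_succAbove_eq hij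
        exact hy' k
    have : C.mulVecLin a = C.mulVecLin 0 := by
      rw [Matrix.mulVecLin_apply, hy, map_zero]
    exact hCinj this
  have hC₀ : IsUnit C₀.det := by
    rw [← Matrix.isUnit_iff_isUnit_det, ← Matrix.mulVec_injective_iff_isUnit]
    intro a b hab
    have : C₀.mulVec (a - b) = 0 := by
      rw [Matrix.mulVec_sub, hab, sub_self]
    exact sub_eq_zero.mp (hkey _ this)
  -- factorization of the square submatrix of M deleting row j₀
  have hMfact : M.submatrix j₀.succAbove id =
      (C₀.map (RatFunc.C : K →+* RatFunc K)) *
        ((RatFunc.X : RatFunc K) • (1 : Matrix (Fin n) (Fin n) (RatFunc K))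
          - ((C₀⁻¹ * D₀).map (RatFunc.C : K →+* RatFunc K))) := by
    have h1 : C₀ * (C₀⁻¹ * D₀) = D₀ := Matrix.mul_nonsing_inv_cancel_left _ _ hC₀
    have h2 : (C₀.map (RatFunc.C : K →+* RatFunc K)) * ((C₀⁻¹ * D₀).map (RatFunc.C : K →+* RatFunc K))
        = D₀.map (RatFunc.C : K →+* RatFunc K) := by
      rw [← Matrix.map_mul, h1]
    rw [Matrix.mul_sub, Matrix.mul_smul, Matrix.mul_one, h2]
    ext i j
    simp [hM, hC₀def, hD₀def, Matrix.submatrix_apply, Matrix.map_apply, Matrix.smul_apply,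
      smul_eq_mul]
  have hdetM₀ : (M.submatrix j₀.succAbove id).det ≠ 0 := by
    rw [hMfact, Matrix.det_mul]
    apply mul_ne_zero
    · have h1 : (C₀.map (RatFunc.C : K →+* RatFunc K)).det = RatFunc.C C₀.det := by
        rw [← RingHom.mapMatrix_apply, ← RingHom.map_det]
      rw [h1]
      intro h
      exact hC₀.ne_zero ((RatFunc.C : K →+* RatFunc K).injective (by rw [h, map_zero]))
    · have hch : ((RatFunc.X : RatFunc K) • (1 : Matrix (Fin n) (Fin n) (RatFunc K))
          - ((C₀⁻¹ * D₀).map (RatFunc.C : K →+* RatFunc K)))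
          = (Matrix.charmatrix (C₀⁻¹ * D₀)).map φ := by
        ext i j
        rcases eq_or_ne i j with rfl | hij
        · rw [Matrix.sub_apply, Matrix.smul_apply, Matrix.one_apply_eq, smul_eq_mul, mul_one,
            Matrix.map_apply, Matrix.map_apply, Matrix.charmatrix_apply_eq, map_sub,
            RatFunc.algebraMap_X, RatFunc.algebraMap_C]
        · rw [Matrix.sub_apply, Matrix.smul_apply, Matrix.one_apply_ne hij, smul_eq_mul, mul_zero,
            Matrix.map_apply, Matrix.map_apply, Matrix.charmatrix_apply_ne _ _ _ hij, map_neg,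
            RatFunc.algebraMap_C, zero_sub]
      rw [hch, ← RingHom.mapMatrix_apply, ← RingHom.map_det]
      intro h
      have h2 : (C₀⁻¹ * D₀).charpoly = 0 := by
        apply hφinj
        show φ ((Matrix.charmatrix (C₀⁻¹ * D₀)).det) = φ 0
        rw [h, map_zero]
      exact (Matrix.charpoly_monic (C₀⁻¹ * D₀)).ne_zero h2
  -- the cofactor vector
  set q : Fin (n+1) → Polynomial K :=
    fun i => (-1)^(i:ℕ) * (P.submatrix i.succAbove id).det with hq
  have hφdet : ∀ i : Fin (n+1),
      φ ((P.submatrix i.succAbove id).det) = (M.submatrix i.succAbove id).det := by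
    intro i
    rw [RingHom.map_det, RingHom.mapMatrix_apply, ← hPM]
    rfl
  have hr₀M : ∀ i : Fin (n+1),
      φ (q i) = (-1 : RatFunc K)^(i:ℕ) * (M.submatrix i.succAbove id).det := by
    intro i
    simp only [hq]
    rw [_root_.map_mul, _root_.map_pow, map_neg, _root_.map_one, hφdet i]
  have hdeg : ∀ i : Fin (n+1), (q i).natDegree ≤ n := by
    intro i
    have hrepr : P.submatrix i.succAbove id
        = (Polynomial.X : Polynomial K) • (C.submatrix i.succAbove id).map Polynomial.C
          + (-(D.submatrix i.succAbove id)).map Polynomial.C := by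
      ext a b
      simp [hP, Matrix.submatrix_apply, Matrix.map_apply, Matrix.smul_apply, smul_eq_mul,
        sub_eq_add_neg]
    have h1 : ((P.submatrix i.succAbove id).det).natDegree ≤ n := by
      rw [hrepr]
      simpa using Polynomial.natDegree_det_X_add_C_le (C.submatrix i.succAbove id)
        (-(D.submatrix i.succAbove id))
    have h2 : (q i) = (P.submatrix i.succAbove id).det
        ∨ (q i) = -(P.submatrix i.succAbove id).det := by
      rcases Nat.even_or_odd (i:ℕ) with h | h
      · left; simp only [hq]; rw [h.neg_one_pow, one_mul]
      · right; simp only [hq]; rw [h.neg_one_pow, neg_one_mul]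
    rcases h2 with h2 | h2 <;> rw [h2] <;> simpa using h1
  -- nonvanishing
  have hne0 : (fun j => φ (q j)) ≠ (0 : Fin (n+1) → RatFunc K) := by
    intro h0
    have h1 : φ (q j₀) = 0 := by simpa using congrFun h0 j₀
    rw [hr₀M j₀] at h1
    rcases mul_eq_zero.mp h1 with h2 | h2
    · exact pow_ne_zero _ (neg_ne_zero.mpr one_ne_zero) h2
    · exact hdetM₀ h2
  -- kernel membership
  have hker0 : Matrix.vecMul (fun j => φ (q j)) M = 0 := by
    funext j
    set B : Matrix (Fin (n+1)) (Fin (n+1)) (RatFunc K) :=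
      Matrix.of (fun i k => Fin.cases (M i j) (fun k' => M i k') k) with hB
    have hdetB : B.det = 0 := by
      refine Matrix.det_zero_of_column_eq (Fin.succ_ne_zero j).symm fun k => ?_
      simp [hB]
    have hexp := Matrix.det_succ_column_zero B
    have hBsub : ∀ i : Fin (n+1), B.submatrix i.succAbove Fin.succ = M.submatrix i.succAbove id := by
      intro i; ext a b; simp [hB, Matrix.submatrix_apply]
    rw [hdetB] at hexp
    have hsum : ∑ i : Fin (n+1), φ (q i) * M i j = 0 := by
      calc ∑ i : Fin (n+1), φ (q i) * M i j
          = ∑ i : Fin (n+1), (-1:RatFunc K)^(i:ℕ) * B i 0 * (B.submatrix i.succAbove Fin.succ).det := by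
            refine Finset.sum_congr rfl fun i _ => ?_
            rw [hr₀M i, hBsub i]
            have : B i 0 = M i j := by simp [hB]
            rw [this]; ring
        _ = 0 := hexp.symm
    show Matrix.vecMul (fun j => φ (q j)) M j = (0 : Fin n → RatFunc K) j
    simpa [Matrix.vecMul, dotProduct] using hsum
  refine ⟨Matrix.of (fun i j => (q j).coeff i), (fun j => φ (q j)), ?_, hne0, hker0, ?_⟩
  · funext j
    have h1 : q j = ∑ i ∈ Finset.range (n+1), Polynomial.monomial i ((q j).coeff i) :=
      (q j).as_sum_range' (n+1) (Nat.lt_succ_of_le (hdeg j))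
    calc φ (q j) = ∑ i ∈ Finset.range (n+1), RatFunc.X ^ i * RatFunc.C ((q j).coeff i) := by
          conv_lhs => rw [h1]
          rw [map_sum]
          exact Finset.sum_congr rfl fun i _ => by
            rw [← Polynomial.C_mul_X_pow_eq_monomial, _root_.map_mul, _root_.map_pow,
              RatFunc.algebraMap_C, RatFunc.algebraMap_X, mul_comm]
      _ = ∑ i : Fin (n + 1),
            RatFunc.X ^ (i:ℕ) * RatFunc.C ((Matrix.of fun i j => (q j).coeff i) i j) := by
          rw [← Fin.sum_univ_eq_sum_range (fun i => RatFunc.X ^ i * RatFunc.C ((q j).coeff i)) (n+1)]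
          rfl
  · intro r hr
    set L : (Fin (n+1) → RatFunc K) →ₗ[RatFunc K] (Fin n → RatFunc K) := Mᵀ.mulVecLin with hL
    have hmem : ∀ v, Matrix.vecMul v M = 0 → v ∈ LinearMap.ker L := by
      intro v hv
      rw [LinearMap.mem_ker, hL, Matrix.mulVecLin_apply, Matrix.mulVec_transpose, hv]
    have hMinj : Function.Injective M.mulVecLin := by
      have hM₀ : IsUnit (M.submatrix j₀.succAbove id) := by
        rw [Matrix.isUnit_iff_isUnit_det]
        exact isUnit_iff_ne_zero.mpr hdetM₀
      have hM₀inj := Matrix.mulVec_injective_iff_isUnit.mpr hM₀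
      intro a b hab
      apply hM₀inj
      funext i
      have h1 := congrFun hab (j₀.succAbove i)
      simpa [Matrix.mulVecLin_apply, Matrix.mulVec, Matrix.submatrix_apply,
        dotProduct] using h1
    have hMrank : M.rank = n := by
      have h2 : Module.finrank (RatFunc K) (LinearMap.range M.mulVecLin)
          = Module.finrank (RatFunc K) (Fin n → RatFunc K) :=
        LinearMap.finrank_range_of_inj hMinj
      rw [Module.finrank_pi, Fintype.card_fin] at h2
      exact h2
    have hker1 : Module.finrank (RatFunc K) (LinearMap.ker L) = 1 := by
      have h2 := LinearMap.finrank_range_add_finrank_ker L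
      have h3 : Module.finrank (RatFunc K) (LinearMap.range L) = n := by
        have h4 : Mᵀ.rank = n := by rw [Matrix.rank_transpose]; exact hMrank
        exact h4
      rw [h3, Module.finrank_pi, Fintype.card_fin] at h2
      omega
    have hr₀mem : (fun i => φ (q i)) ∈ LinearMap.ker L := hmem _ hker0
    have hv_ne : (⟨(fun i => φ (q i)), hr₀mem⟩ : LinearMap.ker L) ≠ 0 := by
      simp only [ne_eq, Submodule.mk_eq_zero]
      exact hne0
    obtain ⟨c, hc⟩ := (finrank_eq_one_iff_of_nonzero' _ hv_ne).mp hker1 ⟨r, hmem r hr⟩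
    refine ⟨c, ?_⟩
    have h5 := congrArg Subtype.val hc
    funext j
    have h6 := congrFun h5 j
    simpa using h6.symm
end

section
/- Let G = (V, E) be a finite directed acyclic graph with coding variables x_{e'e} for each pair of adjacent edges (e', e) (i.e., head(e') = tail(e)). For edges a, b define the transfer polynomial m_{ab}(x) = Σ_{P ∈ P_{ab}} Π of the coding variables along P, where P_{ab} is the set of directed paths from a to b. Fix distinct source edges σ_a, σ_p and distinct sink edges τ_b, τ_q, and a coding variable x_{ee'}. Then the coefficient of x_{ee'}² in m_{σ_a τ_b}(x)·m_{σ_p τ_q}(x) equals the coefficient of x_{ee'}² in m_{σ_a τ_q}(x)·m_{σ_p τ_b}(x). -/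
/-- Adjacency of edges in a network: edge `e'` can follow edge `e` in a path when the
destination node of `e` is the source node of `e'`. -/
def EdgeAdj {V E : Type*} (src dst : E → V) (e e' : E) : Prop := dst e = src e'

/-- `l` is a directed path (a nonempty sequence of consecutively adjacent edges) from
edge `a` to edge `b`. -/
def IsEdgePath {V E : Type*} (src dst : E → V) (a b : E) (l : List E) : Prop :=
  l.Chain' (EdgeAdj src dst) ∧ l.head? = some a ∧ l.getLast? = some b

/-- The monomial `t_P(x)` of a path `P = (e₁,…,e_k)`: the product of the coding variables
`x_{eᵢeᵢ₊₁}` along the path. -/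
noncomputable def pathMonomial {E : Type*} (F : Type*) [Field F] (l : List E) :
    MvPolynomial (E × E) F :=
  ((l.zip l.tail).map fun p => (MvPolynomial.X p : MvPolynomial (E × E) F)).prod

/-- The transfer polynomial `m_{ab}(x) = Σ_{P ∈ P_{ab}} t_P(x)`, where `Paths a b` is the
(finite) set of directed paths from `a` to `b`. -/
noncomputable def transferPoly {E : Type*} (F : Type*) [Field F]
    (Paths : E → E → Finset (List E)) (a b : E) : MvPolynomial (E × E) F :=
  ∑ l ∈ Paths a b, pathMonomial F l

namespace STP
open List MvPolynomial

variable {E : Type*}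

def pairs (l : List E) : List (E × E) := l.zip l.tail

@[simp] lemma pairs_nil : pairs ([] : List E) = [] := rfl
@[simp] lemma pairs_single (a : E) : pairs [a] = [] := rfl
@[simp] lemma pairs_cons_cons (a b : E) (l : List E) :
    pairs (a :: b :: l) = (a, b) :: pairs (b :: l) := rfl

lemma pairs_append : ∀ {A : List E} {B : List E} {e e' : E}, A.getLast? = some e →
    B.head? = some e' → pairs (A ++ B) = pairs A ++ (e, e') :: pairs B := by
  intro A
  induction A with
  | nil => intro B e e' hA; simp at hA
  | cons a A ih =>
    intro B e e' hA hB
    cases A with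
    | nil =>
      cases B with
      | nil => simp at hB
      | cons b B =>
        simp only [getLast?_singleton, Option.some.injEq] at hA
        simp only [head?_cons, Option.some.injEq] at hB
        subst hA; subst hB
        simp [pairs, List.zip]
    | cons c A' =>
      have h1 : (a :: c :: A') ++ B = a :: ((c :: A') ++ B) := rfl
      have h2 : getLast? (c :: A') = some e := by
        rwa [List.getLast?_cons_cons] at hA
      rw [h1]
      have h3 : (c :: A') ++ B = c :: (A' ++ B) := rfl
      rw [h3, pairs_cons_cons, ← h3, ih h2 hB, pairs_cons_cons]
      rfl

lemma chain'_head_last {R : E → E → Prop} :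
    ∀ {l : List E} {x y : E}, l.Chain' R → l.head? = some x → l.getLast? = some y →
      x = y ∨ Relation.TransGen R x y := by
  intro l
  induction l with
  | nil => intro x y _ h; simp at h
  | cons a t ih =>
    intro x y hc hh hl
    simp only [head?_cons, Option.some.injEq] at hh
    subst hh
    cases t with
    | nil =>
      simp only [getLast?_singleton, Option.some.injEq] at hl
      exact Or.inl hl
    | cons b t' =>
      rw [List.getLast?_cons_cons] at hl
      have h1 : R a b := (List.isChain_cons_cons.mp hc).1
      have h2 := ih (List.isChain_cons_cons.mp hc).2 rfl hl
      rcases h2 with h2 | h2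
      · exact Or.inr (h2 ▸ Relation.TransGen.single h1)
      · exact Or.inr (Relation.TransGen.head h1 h2)

variable [DecidableEq E]

def splitA (e e' : E) : List E → List E
  | [] => []
  | [a] => [a]
  | a :: b :: t => if a = e ∧ b = e' then [a] else a :: splitA e e' (b :: t)

def splitB (e e' : E) : List E → List E
  | [] => []
  | [_] => []
  | a :: b :: t => if a = e ∧ b = e' then b :: t else splitB e e' (b :: t)

lemma splitA_head (e e' a : E) (t : List E) : (splitA e e' (a :: t)).head? = some a := by
  cases t with
  | nil => rfl
  | cons b t' =>
    rw [splitA]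
    split <;> simp

lemma split_spec {e e' : E} : ∀ {l : List E}, (e, e') ∈ pairs l →
    splitA e e' l ++ splitB e e' l = l ∧ (splitA e e' l).getLast? = some e ∧
    (splitB e e' l).head? = some e' ∧ (e, e') ∉ pairs (splitA e e' l) := by
  intro l
  induction l with
  | nil => intro h; simp [pairs] at h
  | cons a t ih =>
    intro h
    cases t with
    | nil => simp [pairs] at h
    | cons b t' =>
      rw [pairs_cons_cons, List.mem_cons] at h
      by_cases hab : a = e ∧ b = e'
      · obtain ⟨ha, hb⟩ := hab
        subst ha; subst hb
        rw [splitA, splitB, if_pos ⟨rfl, rfl⟩, if_pos ⟨rfl, rfl⟩]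
        simp
      · have hmem : (e, e') ∈ pairs (b :: t') := by
          rcases h with h | h
          · rw [Prod.mk.injEq] at h
            exact absurd ⟨h.1.symm, h.2.symm⟩ hab
          · exact h
        obtain ⟨h1, h2, h3, h4⟩ := ih hmem
        rw [splitA, splitB, if_neg hab, if_neg hab]
        have hne : splitA e e' (b :: t') ≠ [] := by
          intro hnil
          rw [hnil] at h2; simp at h2
        obtain ⟨s, hs⟩ : ∃ s, splitA e e' (b :: t') = b :: s := by
          have := splitA_head e e' b t'
          cases hA : splitA e e' (b :: t') with
          | nil => exact absurd hA hne
          | cons x s => rw [hA] at this; simp at this; exact ⟨s, by rw [this]⟩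
        refine ⟨by rw [List.cons_append, h1], ?_, h3, ?_⟩
        · rw [hs, List.getLast?_cons_cons, ← hs]; exact h2
        · rw [hs, pairs_cons_cons, List.mem_cons]
          rw [hs] at h4
          rintro (hx | hx)
          · rw [Prod.mk.injEq] at hx
            exact hab ⟨hx.1.symm, hx.2.symm⟩
          · exact h4 hx

lemma split_recon {e e' : E} : ∀ {A B : List E}, A.getLast? = some e → B.head? = some e' →
    (e, e') ∉ pairs A → splitA e e' (A ++ B) = A ∧ splitB e e' (A ++ B) = B := by
  intro A
  induction A with
  | nil => intro B hA; simp at hA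
  | cons a A ih =>
    intro B hA hB hnp
    cases A with
    | nil =>
      simp only [getLast?_singleton, Option.some.injEq] at hA
      cases B with
      | nil => simp at hB
      | cons b B' =>
        simp only [head?_cons, Option.some.injEq] at hB
        constructor
        · show splitA e e' (a :: b :: B') = [a]
          rw [splitA, if_pos ⟨hA, hB⟩]
        · show splitB e e' (a :: b :: B') = b :: B'
          rw [splitB, if_pos ⟨hA, hB⟩]
    | cons c A' =>
      rw [List.getLast?_cons_cons] at hA
      rw [pairs_cons_cons, List.mem_cons] at hnp
      push_neg at hnp
      obtain ⟨hne, hnp'⟩ := hnp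
      have hcond : ¬(a = e ∧ c = e') := by
        rintro ⟨rfl, rfl⟩; exact hne rfl
      have hIH := ih hA hB hnp'
      have hform : (a :: c :: A') ++ B = a :: c :: (A' ++ B) := rfl
      constructor
      · rw [hform, splitA, if_neg hcond]
        have : c :: (A' ++ B) = (c :: A') ++ B := rfl
        rw [this, hIH.1]
      · rw [hform, splitB, if_neg hcond]
        have : c :: (A' ++ B) = (c :: A') ++ B := rfl
        rw [this, hIH.2]

lemma count_le_one {R : E → E → Prop} {e e' : E}
    (hacyc : ∀ x : E, ¬ Relation.TransGen R x x) (hadj : R e e')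
    {l : List E} (hc : l.Chain' R) : (pairs l).count (e, e') ≤ 1 := by
  by_contra hcnt
  push_neg at hcnt
  have hmem : (e, e') ∈ pairs l := List.count_pos_iff.mp (by omega)
  obtain ⟨h1, h2, h3, h4⟩ := split_spec hmem
  set A := splitA e e' l with hA
  set B := splitB e e' l with hB
  clear_value A B
  have hpl : pairs l = pairs A ++ (e, e') :: pairs B := by
    rw [← h1]; exact pairs_append h2 h3
  have hcA : (pairs A).count (e, e') = 0 := List.count_eq_zero.mpr h4
  rw [hpl, List.count_append, hcA, List.count_cons] at hcnt
  simp only [beq_self_eq_true, if_true] at hcnt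
  have hmemB : (e, e') ∈ pairs B := List.count_pos_iff.mp (by omega)
  obtain ⟨g1, g2, g3, g4⟩ := split_spec hmemB
  -- chain facts
  have hcB : B.Chain' R := by
    rw [← h1] at hc
    exact (List.isChain_append.mp hc).2.1
  have hcA' : (splitA e e' B).Chain' R := by
    rw [← g1] at hcB
    exact (List.isChain_append.mp hcB).1
  -- head of splitA B is e'
  have hBne : B ≠ [] := by intro h; rw [h] at h3; simp at h3
  obtain ⟨b, t, rfl⟩ : ∃ b t, B = b :: t := by
    cases B with
    | nil => exact absurd rfl hBne
    | cons b t => exact ⟨b, t, rfl⟩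
  have hhead : (splitA e e' (b :: t)).head? = some b := splitA_head e e' b t
  have hb : b = e' := by simp only [head?_cons, Option.some.injEq] at h3; exact h3
  subst hb
  have := chain'_head_last hcA' hhead g2
  rcases this with h | h
  · exact hacyc e (Relation.TransGen.single (h ▸ hadj))
  · exact hacyc e (Relation.TransGen.head hadj h)

variable (F : Type*) [Field F]

noncomputable def mono (L : List (E × E)) : MvPolynomial (E × E) F :=
  (L.map fun p => (MvPolynomial.X p : MvPolynomial (E × E) F)).prod

lemma pathMonomial_eq (l : List E) : pathMonomial F l = mono F (pairs l) := rfl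

noncomputable def toF (L : List (E × E)) : (E × E) →₀ ℕ := (L.map fun p => Finsupp.single p 1).sum

lemma toF_apply (L : List (E × E)) (q : E × E) : toF L q = L.count q := by
  induction L with
  | nil => simp [toF]
  | cons p L ih =>
    simp only [toF, List.map_cons, List.sum_cons, Finsupp.add_apply] at *
    rw [List.count_cons, ih, Finsupp.single_apply]
    by_cases h : p = q
    · simp [h]
      omega
    · simp [h]

lemma mono_eq_monomial (L : List (E × E)) :
    mono F L = MvPolynomial.monomial (toF L) (1 : F) := by
  induction L with
  | nil =>
    simp [mono, toF, MvPolynomial.monomial_zero']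
  | cons p L ih =>
    have hX : (MvPolynomial.X p : MvPolynomial (E × E) F) =
        MvPolynomial.monomial (Finsupp.single p 1) 1 := rfl
    simp only [mono, List.map_cons, List.prod_cons] at *
    have hT : toF (p :: L) = Finsupp.single p 1 + toF L := by simp [toF]
    rw [ih, hX, MvPolynomial.monomial_mul, one_mul, hT]

lemma path_mul_eq (l₁ l₂ : List E) :
    pathMonomial F l₁ * pathMonomial F l₂ = mono F (pairs l₁ ++ pairs l₂) := by
  simp [pathMonomial_eq, mono]

lemma coeff_path_mul_eq_zero {e e' : E} {R : E → E → Prop}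
    (hacyc : ∀ x : E, ¬ Relation.TransGen R x x) (hadj : R e e')
    {l₁ l₂ : List E} (hc1 : l₁.Chain' R) (hc2 : l₂.Chain' R)
    {m : (E × E) →₀ ℕ} (hm : m (e, e') = 2)
    (hnot : ¬((e, e') ∈ pairs l₁ ∧ (e, e') ∈ pairs l₂)) :
    MvPolynomial.coeff m (pathMonomial F l₁ * pathMonomial F l₂) = 0 := by
  rw [path_mul_eq, mono_eq_monomial, MvPolynomial.coeff_monomial, if_neg]
  intro h
  apply hnot
  have h2 : (pairs l₁).count (e, e') + (pairs l₂).count (e, e') = 2 := by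
    have := toF_apply (pairs l₁ ++ pairs l₂) (e, e')
    rw [h, hm, List.count_append] at this
    omega
  have c1 := count_le_one hacyc hadj hc1
  have c2 := count_le_one hacyc hadj hc2
  exact ⟨List.count_pos_iff.mp (by omega), List.count_pos_iff.mp (by omega)⟩

lemma mono_swap {A₁ B₁ A₂ B₂ : List E} {e e' : E}
    (hA1 : A₁.getLast? = some e) (hB1 : B₁.head? = some e')
    (hA2 : A₂.getLast? = some e) (hB2 : B₂.head? = some e') :
    pathMonomial F (A₁ ++ B₁) * pathMonomial F (A₂ ++ B₂) =
      pathMonomial F (A₁ ++ B₂) * pathMonomial F (A₂ ++ B₁) := by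
  simp only [pathMonomial_eq, pairs_append hA1 hB1, pairs_append hA2 hB2,
    pairs_append hA1 hB2, pairs_append hA2 hB1]
  simp only [mono, List.map_append, List.map_cons, List.prod_append, List.prod_cons]
  ring


lemma ne_nil_of_getLast? {l : List E} {x : E} (h : l.getLast? = some x) : l ≠ [] := by
  rintro rfl; simp at h

lemma ne_nil_of_head? {l : List E} {x : E} (h : l.head? = some x) : l ≠ [] := by
  rintro rfl; simp at h

lemma head?_append_left {A B : List E} (h : A ≠ []) : (A ++ B).head? = A.head? := by
  cases A with
  | nil => exact absurd rfl h
  | cons a t => rfl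

lemma getLast?_append_right {A B : List E} (h : B ≠ []) :
    (A ++ B).getLast? = B.getLast? := by
  rw [List.getLast?_append]
  cases hB : B.getLast? with
  | none => exact absurd (List.getLast?_eq_none_iff.mp hB) h
  | some y => rfl

lemma cross {V : Type*} {src dst : E → V} {e e' : E} (hadj : EdgeAdj src dst e e')
    {s₁ t₁ s₂ t₂ : E} {l₁ l₂ : List E}
    (h1 : IsEdgePath src dst s₁ t₁ l₁) (h2 : IsEdgePath src dst s₂ t₂ l₂)
    (m1 : (e, e') ∈ pairs l₁) (m2 : (e, e') ∈ pairs l₂) :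
    IsEdgePath src dst s₁ t₂ (splitA e e' l₁ ++ splitB e e' l₂) ∧
    (e, e') ∈ pairs (splitA e e' l₁ ++ splitB e e' l₂) ∧
    splitA e e' (splitA e e' l₁ ++ splitB e e' l₂) = splitA e e' l₁ ∧
    splitB e e' (splitA e e' l₁ ++ splitB e e' l₂) = splitB e e' l₂ := by
  obtain ⟨a1, a2, a3, a4⟩ := split_spec m1
  obtain ⟨b1, b2, b3, b4⟩ := split_spec m2
  obtain ⟨hc1, hh1, hl1⟩ := h1
  obtain ⟨hc2, hh2, hl2⟩ := h2
  have hA1ne : splitA e e' l₁ ≠ [] := ne_nil_of_getLast? a2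
  have hB2ne : splitB e e' l₂ ≠ [] := ne_nil_of_head? b3
  have cA1 : (splitA e e' l₁).Chain' (EdgeAdj src dst) := by
    rw [← a1] at hc1; exact (List.isChain_append.mp hc1).1
  have cB2 : (splitB e e' l₂).Chain' (EdgeAdj src dst) := by
    rw [← b1] at hc2; exact (List.isChain_append.mp hc2).2.1
  refine ⟨⟨?_, ?_, ?_⟩, ?_, split_recon a2 b3 a4⟩
  · refine List.isChain_append.mpr ⟨cA1, cB2, ?_⟩
    intro x hx y hy
    rw [a2] at hx; rw [b3] at hy
    simp only [Option.mem_def, Option.some.injEq] at hx hy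
    rw [← hx, ← hy]
    exact hadj
  · rw [head?_append_left hA1ne]
    rw [← a1, head?_append_left hA1ne] at hh1
    exact hh1
  · rw [getLast?_append_right hB2ne]
    rw [← b1, getLast?_append_right hB2ne] at hl2
    exact hl2
  · rw [pairs_append a2 b3]
    exact List.mem_append.mpr (Or.inr (List.mem_cons_self))

end STP

open STP

/-- **Square-Term Property.** In a finite DAG, for distinct source edges
`σa ≠ σp`, distinct sink edges `τb ≠ τq` and a coding variable `x_{ee'}`, the coefficient
of `x_{ee'}²` in `m_{σaτb}·m_{σpτq}` equals the coefficient of `x_{ee'}²` in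
`m_{σaτq}·m_{σpτb}` (coefficients of `x_{ee'}²` are compared monomial-by-monomial over
the remaining variables). -/
theorem square_term_property
    {V E F : Type*} [Fintype E] [Field F] (src dst : E → V)
    (hacyc : ∀ e : E, ¬ Relation.TransGen (EdgeAdj src dst) e e)
    (Paths : E → E → Finset (List E))
    (hPaths : ∀ a b l, l ∈ Paths a b ↔ IsEdgePath src dst a b l)
    (σa σp τb τq : E) (hσ : σa ≠ σp) (hτ : τb ≠ τq)
    (e e' : E) (hadj : EdgeAdj src dst e e')
    (m : (E × E) →₀ ℕ) (hm : m (e, e') = 2) :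
    MvPolynomial.coeff m (transferPoly F Paths σa τb * transferPoly F Paths σp τq) =
      MvPolynomial.coeff m (transferPoly F Paths σa τq * transferPoly F Paths σp τb) := by
  classical
  simp only [transferPoly, Finset.sum_mul_sum, MvPolynomial.coeff_sum]
  rw [← Finset.sum_product' (Paths σa τb) (Paths σp τq)
        (fun l₁ l₂ => MvPolynomial.coeff m (pathMonomial F l₁ * pathMonomial F l₂)),
      ← Finset.sum_product' (Paths σa τq) (Paths σp τb)
        (fun l₁ l₂ => MvPolynomial.coeff m (pathMonomial F l₁ * pathMonomial F l₂))]
  set f : List E × List E → F :=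
    fun p => MvPolynomial.coeff m (pathMonomial F p.1 * pathMonomial F p.2) with hf
  set Q : List E × List E → Prop :=
    fun p => (e, e') ∈ pairs p.1 ∧ (e, e') ∈ pairs p.2 with hQ
  have hz : ∀ a b c d : E,
      ∑ p ∈ (Paths a b ×ˢ Paths c d).filter (fun p => ¬ Q p), f p = 0 := by
    intro a b c d
    apply Finset.sum_eq_zero
    intro p hp
    rw [Finset.mem_filter, Finset.mem_product] at hp
    obtain ⟨⟨h1, h2⟩, hnp⟩ := hp
    exact coeff_path_mul_eq_zero F hacyc hadj ((hPaths _ _ _).mp h1).1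
      ((hPaths _ _ _).mp h2).1 hm hnp
  rw [← Finset.sum_filter_add_sum_filter_not (Paths σa τb ×ˢ Paths σp τq) Q f,
      ← Finset.sum_filter_add_sum_filter_not (Paths σa τq ×ˢ Paths σp τb) Q f,
      hz, hz, add_zero, add_zero]
  -- key: the swap map sends one filtered set to the other
  have key : ∀ (s₁ t₁ s₂ t₂ : E) (p : List E × List E),
      p ∈ (Paths s₁ t₁ ×ˢ Paths s₂ t₂).filter Q →
      ((splitA e e' p.1 ++ splitB e e' p.2, splitA e e' p.2 ++ splitB e e' p.1) ∈
        (Paths s₁ t₂ ×ˢ Paths s₂ t₁).filter Q) ∧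
      splitA e e' (splitA e e' p.1 ++ splitB e e' p.2) = splitA e e' p.1 ∧
      splitB e e' (splitA e e' p.1 ++ splitB e e' p.2) = splitB e e' p.2 ∧
      splitA e e' (splitA e e' p.2 ++ splitB e e' p.1) = splitA e e' p.2 ∧
      splitB e e' (splitA e e' p.2 ++ splitB e e' p.1) = splitB e e' p.1 ∧
      splitA e e' p.1 ++ splitB e e' p.1 = p.1 ∧
      splitA e e' p.2 ++ splitB e e' p.2 = p.2 := by
    intro s₁ t₁ s₂ t₂ p hp
    rw [Finset.mem_filter, Finset.mem_product] at hp
    obtain ⟨⟨h1, h2⟩, hq1, hq2⟩ := hp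
    have hP1 := (hPaths _ _ _).mp h1
    have hP2 := (hPaths _ _ _).mp h2
    obtain ⟨c1, cm1, cA1, cB1⟩ := cross hadj hP1 hP2 hq1 hq2
    obtain ⟨c2, cm2, cA2, cB2⟩ := cross hadj hP2 hP1 hq2 hq1
    refine ⟨?_, cA1, cB1, cA2, cB2, (split_spec hq1).1, (split_spec hq2).1⟩
    rw [Finset.mem_filter, Finset.mem_product]
    exact ⟨⟨(hPaths _ _ _).mpr c1, (hPaths _ _ _).mpr c2⟩, cm1, cm2⟩
  refine Finset.sum_nbij'
    (i := fun p => (splitA e e' p.1 ++ splitB e e' p.2, splitA e e' p.2 ++ splitB e e' p.1))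
    (j := fun p => (splitA e e' p.1 ++ splitB e e' p.2, splitA e e' p.2 ++ splitB e e' p.1))
    (fun p hp => (key _ _ _ _ p hp).1) (fun p hp => (key _ _ _ _ p hp).1) ?_ ?_ ?_
  · intro p hp
    obtain ⟨h1, cA1, cB1, cA2, cB2, r1, r2⟩ := key _ _ _ _ p hp
    simp only [cA1, cB1, cA2, cB2]
    exact Prod.ext (by simpa using r1) (by simpa using r2)
  · intro p hp
    obtain ⟨h1, cA1, cB1, cA2, cB2, r1, r2⟩ := key _ _ _ _ p hp
    simp only [cA1, cB1, cA2, cB2]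
    exact Prod.ext (by simpa using r1) (by simpa using r2)
  · intro p hp
    rw [Finset.mem_filter, Finset.mem_product] at hp
    obtain ⟨⟨h1, h2⟩, hq1, hq2⟩ := hp
    obtain ⟨a1, a2, a3, a4⟩ := split_spec hq1
    obtain ⟨b1, b2, b3, b4⟩ := split_spec hq2
    show f p = f _
    rw [hf]
    simp only
    conv_lhs => rw [← a1, ← b1]
    rw [mono_swap F a2 a3 b2 b3]
end

section
/- In a directed acyclic graph with edge transfer polynomials m defined as sums of path monomials, for four edges σ_a, σ_p, τ_b, τ_q: m_{σ_a τ_b}(x)·m_{σ_p τ_q}(x) ≠ m_{σ_a τ_q}(x)·m_{σ_p τ_b}(x) (as polynomials) if and only if there exists an edge-disjoint pair of paths (P₁, P₂) with P₁ a path from σ_a to τ_b and P₂ a path from σ_p to τ_q, or an edge-disjoint pair (P₃, P₄) with P₃ from σ_a to τ_q and P₄ from σ_p to τ_b. -/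
namespace TPAux
open List MvPolynomial

variable {E : Type*}

/-! ### Consecutive pairs of a list -/

/-- consecutive pairs of a list -/
def pairs : List E → List (E × E)
  | [] => []
  | [_] => []
  | a :: b :: t => (a, b) :: pairs (b :: t)

lemma pairs_eq_zip : ∀ l : List E, pairs l = l.zip l.tail
  | [] => rfl
  | [_] => rfl
  | a :: b :: t => by
    show (a, b) :: pairs (b :: t) = _
    rw [pairs_eq_zip (b :: t)]; rfl

lemma map_fst_pairs : ∀ l : List E, (pairs l).map Prod.fst = l.dropLast
  | [] => rfl
  | [_] => rfl
  | a :: b :: t => by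
    show (a, b).1 :: (pairs (b :: t)).map Prod.fst = _
    rw [map_fst_pairs (b :: t)]; rfl

lemma pairs_append_cons : ∀ (u : List E) (e : E) (w : List E),
    pairs (u ++ e :: w) = pairs (u ++ [e]) ++ pairs (e :: w)
  | [], e, w => by simp [pairs]
  | [a], e, w => by
    show (a, e) :: pairs (e :: w) = pairs [a, e] ++ pairs (e :: w)
    rfl
  | a :: b :: u, e, w => by
    show (a, b) :: pairs (b :: (u ++ e :: w)) = ((a, b) :: pairs (b :: (u ++ [e]))) ++ pairs (e :: w)
    rw [show b :: (u ++ e :: w) = (b :: u) ++ e :: w from rfl,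
      pairs_append_cons (b :: u) e w]; rfl

lemma head?_append_cons (u : List E) (e : E) (w w' : List E) :
    (u ++ e :: w).head? = (u ++ e :: w').head? := by
  cases u <;> rfl

lemma getLast?_append_cons (u : List E) (e : E) (w : List E) :
    (u ++ e :: w).getLast? = (e :: w).getLast? := by
  rw [List.getLast?_append]
  cases h : (e :: w).getLast? with
  | none => simp at h
  | some x => rfl

lemma getLast_not_mem_dropLast {l : List E} (hn : l.Nodup) (h : l ≠ []) :
    l.getLast h ∉ l.dropLast := by
  intro hmem
  have := List.dropLast_concat_getLast h
  rw [← this] at hn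
  rcases List.nodup_append.1 hn with ⟨-, -, hd⟩
  exact hd _ hmem _ (by simp) rfl

lemma mem_of_getLast?_eq {l : List E} {x : E} (h : l.getLast? = some x) : x ∈ l := by
  cases l with
  | nil => simp at h
  | cons a t =>
    rw [List.getLast?_eq_getLast (l := a :: t) (by simp)] at h
    have : (a :: t).getLast (by simp) = x := by simpa using h
    exact this ▸ List.getLast_mem _

lemma coe_append (a b : List E) : ((a ++ b : List E) : Multiset E) = ↑a + ↑b := rfl

/-! ### Paths are duplicate-free in a DAG -/

lemma path_nodup {V : Type*} {src dst : E → V}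
    (hacyc : ∀ e : E, ¬ Relation.TransGen (EdgeAdj src dst) e e)
    {l : List E} (hl : l.Chain' (EdgeAdj src dst)) : l.Nodup := by
  have h1 : l.Chain' (Relation.TransGen (EdgeAdj src dst)) :=
    hl.imp fun {a b} h => Relation.TransGen.single h
  have h2 := (List.isChain_iff_pairwise).1 h1
  refine h2.imp ?_
  intro a b h heq
  exact hacyc a (heq ▸ h)

/-! ### Splitting a crossing pair of lists at the first shared element -/

lemma exists_split {l₁ l₂ : List E} (h : ¬ l₁.Disjoint l₂) :
    ∃ u e w, l₁ = u ++ e :: w ∧ e ∈ l₂ ∧ ∀ f ∈ u, f ∉ l₂ := by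
  classical
  induction l₁ with
  | nil => exact absurd (by intro a ha; simp at ha) h
  | cons a t ih =>
    by_cases ha : a ∈ l₂
    · exact ⟨[], a, t, rfl, ha, by simp⟩
    · have ht : ¬ t.Disjoint l₂ := by
        intro hd
        apply h
        intro x hx hx2
        rcases List.mem_cons.1 hx with rfl | hx'
        · exact ha hx2
        · exact hd hx' hx2
      obtain ⟨u, e, w, rfl, he, hu⟩ := ih ht
      refine ⟨a :: u, e, w, rfl, he, ?_⟩
      intro f hf
      rcases List.mem_cons.1 hf with rfl | hf'
      · exact ha
      · exact hu f hf'

lemma split_unique {L : List E} :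
    ∀ {u : List E} {e : E} {w u' : List E} {e' : E} {w' : List E},
      u ++ e :: w = u' ++ e' :: w' → e ∈ L → e' ∈ L →
      (∀ f ∈ u, f ∉ L) → (∀ f ∈ u', f ∉ L) → u = u' ∧ e = e' ∧ w = w' := by
  intro u
  induction u with
  | nil =>
    intro e w u' e' w' heq he he' _ hu'
    cases u' with
    | nil => simpa using heq
    | cons b u'' =>
      simp only [List.nil_append, List.cons_append, List.cons.injEq] at heq
      exact absurd he (heq.1 ▸ hu' b (by simp))
  | cons a u₀ ih =>
    intro e w u' e' w' heq he he' hu hu'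
    cases u' with
    | nil =>
      simp only [List.nil_append, List.cons_append, List.cons.injEq] at heq
      exact absurd he' ((heq.1 ▸ hu a (by simp)))
    | cons b u₁ =>
      simp only [List.cons_append, List.cons.injEq] at heq
      obtain ⟨rfl, heq2⟩ := heq
      obtain ⟨h1, h2, h3⟩ := ih heq2 he he' (fun f hf => hu f (by simp [hf]))
        (fun f hf => hu' f (by simp [hf]))
      exact ⟨by rw [h1], h2, h3⟩

lemma split_unique_nodup {e : E} :
    ∀ {u w u' w' : List E}, u ++ e :: w = u' ++ e :: w' → (u ++ e :: w).Nodup →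
      u = u' ∧ w = w' := by
  intro u
  induction u with
  | nil =>
    intro w u' w' heq hn
    cases u' with
    | nil => simpa using heq
    | cons b u'' =>
      simp only [List.nil_append, List.cons_append, List.cons.injEq] at heq
      obtain ⟨rfl, rfl⟩ := heq
      simp at hn
  | cons a u₀ ih =>
    intro w u' w' heq hn
    cases u' with
    | nil =>
      simp only [List.nil_append, List.cons_append, List.cons.injEq] at heq
      obtain ⟨rfl, rfl⟩ := heq
      simp at hn
    | cons b u₁ =>
      simp only [List.cons_append, List.cons.injEq] at heq
      obtain ⟨rfl, heq2⟩ := heq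
      have hn' : (u₀ ++ e :: w).Nodup := (List.nodup_cons.1 hn).2
      obtain ⟨h1, h2⟩ := ih heq2 hn'
      exact ⟨by rw [h1], h2⟩

/-- A crossing decomposition of a crossing pair of lists: the first element of `l₁`
that also lies in `l₂`, together with the corresponding splittings. -/
structure Crossing (l₁ l₂ : List E) where
  u : List E
  e : E
  w : List E
  u' : List E
  w' : List E
  h₁ : l₁ = u ++ e :: w
  h₂ : l₂ = u' ++ e :: w'
  hmin : ∀ f ∈ u, f ∉ l₂

variable {l₁ l₂ : List E}

lemma nonempty_crossing (h : ¬ l₁.Disjoint l₂) : Nonempty (Crossing l₁ l₂) := by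
  obtain ⟨u, e, w, h1, he, hu⟩ := exists_split h
  obtain ⟨u', w', h2⟩ := List.append_of_mem he
  exact ⟨⟨u, e, w, u', w', h1, h2, hu⟩⟩

noncomputable def cross (h : ¬ l₁.Disjoint l₂) : Crossing l₁ l₂ :=
  (nonempty_crossing h).some

/-- output of the suffix swap -/
def Crossing.out (c : Crossing l₁ l₂) : List E × List E :=
  (c.u ++ c.e :: c.w', c.u' ++ c.e :: c.w)

lemma crossing_eq (c c' : Crossing l₁ l₂) (hn₂ : l₂.Nodup) :
    c.u = c'.u ∧ c.e = c'.e ∧ c.w = c'.w ∧ c.u' = c'.u' ∧ c.w' = c'.w' := by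
  obtain ⟨u, e, w, u', w', h1, h2, hmin⟩ := c
  obtain ⟨v, f, x, v', x', g1, g2, gmin⟩ := c'
  subst h1 h2
  simp only at *
  have he : e ∈ u' ++ e :: w' := by simp
  have he' : f ∈ u' ++ e :: w' := by rw [g2]; simp
  obtain ⟨hu, heq, hw⟩ := split_unique g1 he he' hmin gmin
  subst heq
  obtain ⟨hu', hw'⟩ := split_unique_nodup g2 hn₂
  exact ⟨hu, rfl, hw, hu', hw'⟩

/-- the swapped pair is itself crossing, with the same crossing data -/
def Crossing.swap (c : Crossing l₁ l₂) (hn₁ : l₁.Nodup) :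
    Crossing (c.u ++ c.e :: c.w') (c.u' ++ c.e :: c.w) :=
  ⟨c.u, c.e, c.w', c.u', c.w, rfl, rfl, by
    have hn₁' : (c.u ++ c.e :: c.w).Nodup := c.h₁ ▸ hn₁
    intro f hf hmem
    have hfl₂ : ∀ x, x ∈ c.u' ∨ x = c.e → x ∈ l₂ := by
      intro x hx
      rw [c.h₂]
      rcases hx with hx | rfl
      · simp [hx]
      · simp
    rcases List.mem_append.1 hmem with hf2 | hf2
    · exact c.hmin f hf (hfl₂ f (Or.inl hf2))
    · rcases List.mem_cons.1 hf2 with heq | hf3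
      · exact c.hmin f hf (hfl₂ f (Or.inr heq))
      · rcases List.nodup_append.1 hn₁' with ⟨-, -, hd⟩
        exact hd _ hf _ (by simp [hf3]) rfl⟩

lemma out_not_disjoint (c : Crossing l₁ l₂) :
    ¬ (c.u ++ c.e :: c.w').Disjoint (c.u' ++ c.e :: c.w) := fun hd =>
  hd (a := c.e) (by simp) (by simp)

lemma cross_out_involutive (h : ¬ l₁.Disjoint l₂) (hn₁ : l₁.Nodup)
    (h' : ¬ ((cross h).out.1.Disjoint (cross h).out.2))
    (hm₂ : (cross h).out.2.Nodup) :
    (cross h').out = (l₁, l₂) := by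
  set c := cross h with hc
  have key := crossing_eq (cross h') (c.swap hn₁) hm₂
  obtain ⟨e1, e2, e3, e4, e5⟩ := key
  show ((cross h').u ++ (cross h').e :: (cross h').w',
    (cross h').u' ++ (cross h').e :: (cross h').w) = (l₁, l₂)
  rw [e1, e2, e3, e4, e5]
  show (c.u ++ c.e :: c.w, c.u' ++ c.e :: c.w') = (l₁, l₂)
  rw [← c.h₁, ← c.h₂]

/-- path property of the first swapped path -/
lemma isPath_out₁ {V : Type*} {src dst : E → V} {a b p q : E} (c : Crossing l₁ l₂)
    (hp1 : IsEdgePath src dst a b l₁) (hp2 : IsEdgePath src dst p q l₂) :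
    IsEdgePath src dst a q (c.u ++ c.e :: c.w') := by
  obtain ⟨hc1, hh1, hl1⟩ := hp1
  obtain ⟨hc2, hh2, hl2⟩ := hp2
  rw [c.h₁] at hc1 hh1 hl1
  rw [c.h₂] at hc2 hh2 hl2
  refine ⟨?_, ?_, ?_⟩
  · rcases List.isChain_append.1 hc1 with ⟨hu, -, hrel⟩
    rcases List.isChain_append.1 hc2 with ⟨-, hew', -⟩
    exact List.isChain_append.2 ⟨hu, hew', by simpa using hrel⟩
  · rw [head?_append_cons c.u c.e c.w' c.w]; exact hh1
  · rw [getLast?_append_cons c.u c.e c.w', ← getLast?_append_cons c.u' c.e c.w']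
    exact hl2

/-- path property of the second swapped path -/
lemma isPath_out₂ {V : Type*} {src dst : E → V} {a b p q : E} (c : Crossing l₁ l₂)
    (hp1 : IsEdgePath src dst a b l₁) (hp2 : IsEdgePath src dst p q l₂) :
    IsEdgePath src dst p b (c.u' ++ c.e :: c.w) := by
  obtain ⟨hc1, hh1, hl1⟩ := hp1
  obtain ⟨hc2, hh2, hl2⟩ := hp2
  rw [c.h₁] at hc1 hh1 hl1
  rw [c.h₂] at hc2 hh2 hl2
  refine ⟨?_, ?_, ?_⟩
  · rcases List.isChain_append.1 hc2 with ⟨hu', -, hrel⟩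
    rcases List.isChain_append.1 hc1 with ⟨-, hew, -⟩
    exact List.isChain_append.2 ⟨hu', hew, by simpa using hrel⟩
  · rw [head?_append_cons c.u' c.e c.w c.w']; exact hh2
  · rw [getLast?_append_cons c.u' c.e c.w, ← getLast?_append_cons c.u c.e c.w]
    exact hl1

/-- the suffix swap preserves the multiset of consecutive pairs -/
lemma key_out (c : Crossing l₁ l₂) :
    (pairs (c.u ++ c.e :: c.w') : Multiset (E × E)) +
      (pairs (c.u' ++ c.e :: c.w) : Multiset (E × E)) =
    (pairs l₁ : Multiset (E × E)) + (pairs l₂ : Multiset (E × E)) := by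
  obtain ⟨u, e, w, u', w', h1, h2, hmin⟩ := c
  subst h1 h2
  simp only
  rw [pairs_append_cons u e w', pairs_append_cons u' e w,
    pairs_append_cons u e w, pairs_append_cons u' e w',
    coe_append, coe_append, coe_append, coe_append]
  abel

/-! ### Uniqueness: a disjoint pair of paths is determined by its multiset of pairs -/

lemma fst_nodup_unique {M : Multiset (E × E)} (hM : (M.map Prod.fst).Nodup)
    {a b b' : E} (h1 : (a, b) ∈ M) (h2 : (a, b') ∈ M) : b = b' := by
  classical
  by_contra hne
  have hpair : ((a, b') : E × E) ≠ (a, b) := fun h => hne (congrArg Prod.snd h).symm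
  have h2' : (a, b') ∈ M.erase (a, b) := (Multiset.mem_erase_of_ne hpair).2 h2
  have hMe : M = (a, b) ::ₘ M.erase (a, b) := (Multiset.cons_erase h1).symm
  rw [hMe, Multiset.map_cons, Multiset.nodup_cons] at hM
  exact hM.1 (Multiset.mem_map.2 ⟨(a, b'), h2', rfl⟩)

lemma chain_unique {M : Multiset (E × E)} (hM : (M.map Prod.fst).Nodup) :
    ∀ (L L' : List E), L.head? = L'.head? →
    (∀ q ∈ pairs L, q ∈ M) → (∀ q ∈ pairs L', q ∈ M) →
    (∀ x ∈ L.getLast?, ∀ f, (x, f) ∉ M) → (∀ x ∈ L'.getLast?, ∀ f, (x, f) ∉ M) →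
    L = L' := by
  intro L
  induction L with
  | nil =>
    intro L' hh _ _ _ _
    cases L' with
    | nil => rfl
    | cons a t => simp at hh
  | cons a t ih =>
    intro L' hh hq hq' hlast hlast'
    cases L' with
    | nil => simp at hh
    | cons a' t' =>
      simp only [List.head?_cons, Option.some.injEq] at hh
      subst hh
      cases t with
      | nil =>
        cases t' with
        | nil => rfl
        | cons b' s' =>
          have : (a, b') ∈ M := hq' (a, b') (by show _ ∈ (a, b') :: pairs (b' :: s'); simp)
          exact absurd this (hlast a (by simp) b')
      | cons b s =>
        cases t' with
        | nil =>
          have : (a, b) ∈ M := hq (a, b) (by show _ ∈ (a, b) :: pairs (b :: s); simp)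
          exact absurd this (hlast' a (by simp) b)
        | cons b' s' =>
          have hab : (a, b) ∈ M := hq (a, b) (by show _ ∈ (a, b) :: pairs (b :: s); simp)
          have hab' : (a, b') ∈ M := hq' (a, b') (by show _ ∈ (a, b') :: pairs (b' :: s'); simp)
          have hbb' : b = b' := fst_nodup_unique hM hab hab'
          subst hbb'
          have := ih (b :: s')
            (by rfl)
            (fun q hqm => hq q (by show q ∈ (a, b) :: pairs (b :: s); simp [hqm]))
            (fun q hqm => hq' q (by show q ∈ (a, b) :: pairs (b :: s'); simp [hqm]))
            (by
              intro x hx f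
              exact hlast x (by rw [List.getLast?_cons_cons]; exact hx) f)
            (by
              intro x hx f
              exact hlast' x (by rw [List.getLast?_cons_cons]; exact hx) f)
          rw [this]

lemma disjoint_pair_unique {P1 P2 Q1 Q2 : List E}
    (hn1 : P1.Nodup) (hn2 : P2.Nodup) (hm1 : Q1.Nodup) (hm2 : Q2.Nodup)
    (hd : P1.Disjoint P2) (hd' : Q1.Disjoint Q2)
    (hh1 : P1.head? = Q1.head?) (hh2 : P2.head? = Q2.head?)
    (hk : (pairs P1 : Multiset (E × E)) + (pairs P2 : Multiset (E × E)) =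
          (pairs Q1 : Multiset (E × E)) + (pairs Q2 : Multiset (E × E))) :
    P1 = Q1 ∧ P2 = Q2 := by
  have key : ∀ (A B C D : List E), A.Nodup → B.Nodup → C.Nodup → D.Nodup →
      A.Disjoint B → C.Disjoint D → A.head? = C.head? →
      (pairs A : Multiset (E × E)) + (pairs B : Multiset (E × E)) =
        (pairs C : Multiset (E × E)) + (pairs D : Multiset (E × E)) → A = C := by
    intro A B C D na nb nc nd dab dcd hh hkk
    have hfst : ((pairs A : Multiset (E × E)) + (pairs B : Multiset (E × E))).map Prod.fst
        = (A.dropLast : Multiset E) + (B.dropLast : Multiset E) := by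
      rw [Multiset.map_add]; simp [map_fst_pairs]
    have hfst' : ((pairs A : Multiset (E × E)) + (pairs B : Multiset (E × E))).map Prod.fst
        = (C.dropLast : Multiset E) + (D.dropLast : Multiset E) := by
      rw [hkk, Multiset.map_add]; simp [map_fst_pairs]
    have hM : (((pairs A : Multiset (E × E)) + (pairs B : Multiset (E × E))).map
        Prod.fst).Nodup := by
      rw [hfst, Multiset.nodup_add]
      refine ⟨(List.dropLast_sublist A).nodup na, (List.dropLast_sublist B).nodup nb, ?_⟩
      rw [Multiset.disjoint_left]
      intro x hx1 hx2
      exact dab ((List.dropLast_sublist A).mem (by exact_mod_cast hx1))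
        ((List.dropLast_sublist B).mem (by exact_mod_cast hx2))
    have lastP : ∀ (L O : List E), L.Disjoint O → L.Nodup →
        ((pairs A : Multiset (E × E)) + (pairs B : Multiset (E × E))).map Prod.fst
          = (L.dropLast : Multiset E) + (O.dropLast : Multiset E) →
        ∀ x ∈ L.getLast?, ∀ f, (x, f) ∉
          ((pairs A : Multiset (E × E)) + (pairs B : Multiset (E × E))) := by
      intro L O hdis hnd hfL x hx f hmem
      have hLne : L ≠ [] := by rintro rfl; simp at hx
      have hxl : x = L.getLast hLne := by
        rw [List.getLast?_eq_getLast hLne] at hx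
        simpa [eq_comm] using hx
      have hxf : x ∈ ((pairs A : Multiset (E × E)) + (pairs B : Multiset (E × E))).map
          Prod.fst := Multiset.mem_map.2 ⟨(x, f), hmem, rfl⟩
      rw [hfL, Multiset.mem_add] at hxf
      rcases hxf with hx1 | hx1
      · exact getLast_not_mem_dropLast hnd hLne (hxl ▸ (by exact_mod_cast hx1))
      · exact hdis (hxl ▸ List.getLast_mem hLne)
          ((List.dropLast_sublist O).mem (by exact_mod_cast hx1))
    refine chain_unique hM A C hh ?_ ?_ ?_ ?_
    · intro q hq; simp [hq]
    · intro q hq; rw [hkk]; simp [hq]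
    · exact lastP A B dab na hfst
    · exact lastP C D dcd nc hfst'
  constructor
  · exact key P1 P2 Q1 Q2 hn1 hn2 hm1 hm2 hd hd' hh1 hk
  · refine key P2 P1 Q2 Q1 hn2 hn1 hm2 hm1 (fun x h1 h2 => hd h2 h1)
      (fun x h1 h2 => hd' h2 h1) hh2 ?_
    rw [add_comm, hk, add_comm]

/-! ### Polynomial bookkeeping -/

open Classical in
/-- the exponent (as a finsupp) of the monomial attached to a pair of paths -/
noncomputable def keyF (p : List E × List E) : (E × E) →₀ ℕ :=
  Multiset.toFinsupp ((pairs p.1 : Multiset (E × E)) + (pairs p.2 : Multiset (E × E)))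

open Classical in
lemma keyF_inj {p q : List E × List E} (h : keyF p = keyF q) :
    (pairs p.1 : Multiset (E × E)) + (pairs p.2 : Multiset (E × E)) =
      (pairs q.1 : Multiset (E × E)) + (pairs q.2 : Multiset (E × E)) :=
  Multiset.toFinsupp.injective h

open Classical in
lemma pathMonomial_eq {F : Type*} [Field F] (l : List E) :
    pathMonomial F l = monomial (Multiset.toFinsupp (pairs l : Multiset (E × E))) (1 : F) := by
  rw [pathMonomial, ← pairs_eq_zip]
  induction pairs l with
  | nil => simp [monomial_zero', C_1]
  | cons p L ih =>
    have hcons : ((p :: L : List (E × E)) : Multiset (E × E)) = p ::ₘ (L : Multiset (E × E)) :=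
      rfl
    rw [List.map_cons, List.prod_cons, ih, hcons]
    have : (X p : MvPolynomial (E × E) F) = monomial (Finsupp.single p 1) 1 := rfl
    rw [this, monomial_mul, one_mul]
    congr 1
    rw [show p ::ₘ (L : Multiset (E × E)) = ({p} : Multiset (E × E)) + L from by
      simp [Multiset.singleton_add]]
    rw [Multiset.toFinsupp_add, Multiset.toFinsupp_singleton]

open Classical in
lemma transfer_mul {F : Type*} [Field F] (Paths : E → E → Finset (List E)) (a b p q : E) :
    transferPoly F Paths a b * transferPoly F Paths p q
      = ∑ pr ∈ (Paths a b) ×ˢ (Paths p q), monomial (keyF pr) (1 : F) := by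
  rw [transferPoly, transferPoly, Finset.sum_mul_sum, Finset.sum_product]
  refine Finset.sum_congr rfl fun x _ => Finset.sum_congr rfl fun y _ => ?_
  rw [pathMonomial_eq, pathMonomial_eq, monomial_mul, one_mul]
  congr 1
  rw [keyF, Multiset.toFinsupp_add]

open Classical in
lemma coeff_sum_monomial {F : Type*} [Field F] (s : Finset (List E × List E))
    (d : (E × E) →₀ ℕ) :
    MvPolynomial.coeff d (∑ p ∈ s, monomial (keyF p) (1 : F))
      = ((s.filter (fun p => keyF p = d)).card : F) := by
  rw [MvPolynomial.coeff_sum]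
  rw [Finset.sum_congr rfl fun p _ => MvPolynomial.coeff_monomial d (keyF p) (1 : F)]
  exact Finset.sum_boole _ _

end TPAux

section MainLemmas

open TPAux MvPolynomial

variable {V E : Type*} {F : Type*} [Field F]

open Classical in
lemma diff_eq (src dst : E → V)
    (hacyc : ∀ e : E, ¬ Relation.TransGen (EdgeAdj src dst) e e)
    (Paths : E → E → Finset (List E))
    (hPaths : ∀ a b l, l ∈ Paths a b ↔ IsEdgePath src dst a b l)
    (σa σp τb τq : E) :
    transferPoly F Paths σa τb * transferPoly F Paths σp τq -
      transferPoly F Paths σa τq * transferPoly F Paths σp τb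
    = (∑ pr ∈ ((Paths σa τb) ×ˢ (Paths σp τq)).filter (fun pr => pr.1.Disjoint pr.2),
        monomial (keyF pr) (1 : F))
      - ∑ pr ∈ ((Paths σa τq) ×ˢ (Paths σp τb)).filter (fun pr => pr.1.Disjoint pr.2),
        monomial (keyF pr) (1 : F) := by
  have nodup_of : ∀ {a b : E} {l : List E}, l ∈ Paths a b → l.Nodup := by
    intro a b l hl
    exact path_nodup hacyc ((hPaths a b l).1 hl).1
  rw [transfer_mul Paths σa τb σp τq, transfer_mul Paths σa τq σp τb]
  rw [← Finset.sum_filter_add_sum_filter_not ((Paths σa τb) ×ˢ (Paths σp τq))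
    (fun pr => pr.1.Disjoint pr.2) (fun pr => monomial (keyF pr) (1 : F))]
  rw [← Finset.sum_filter_add_sum_filter_not ((Paths σa τq) ×ˢ (Paths σp τb))
    (fun pr => pr.1.Disjoint pr.2) (fun pr => monomial (keyF pr) (1 : F))]
  have hcross :
      (∑ pr ∈ ((Paths σa τb) ×ˢ (Paths σp τq)).filter (fun pr => ¬ pr.1.Disjoint pr.2),
        monomial (keyF pr) (1 : F))
      = ∑ pr ∈ ((Paths σa τq) ×ˢ (Paths σp τb)).filter (fun pr => ¬ pr.1.Disjoint pr.2),
        monomial (keyF pr) (1 : F) := by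
    have memA : ∀ {pr : List E × List E},
        pr ∈ ((Paths σa τb) ×ˢ (Paths σp τq)).filter (fun pr => ¬ pr.1.Disjoint pr.2) →
        IsEdgePath src dst σa τb pr.1 ∧ IsEdgePath src dst σp τq pr.2 ∧
          ¬ pr.1.Disjoint pr.2 := by
      intro pr hpr
      obtain ⟨hmem, hnd⟩ := Finset.mem_filter.1 hpr
      obtain ⟨h1, h2⟩ := Finset.mem_product.1 hmem
      exact ⟨(hPaths _ _ _).1 h1, (hPaths _ _ _).1 h2, hnd⟩
    have memB : ∀ {pr : List E × List E},
        pr ∈ ((Paths σa τq) ×ˢ (Paths σp τb)).filter (fun pr => ¬ pr.1.Disjoint pr.2) →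
        IsEdgePath src dst σa τq pr.1 ∧ IsEdgePath src dst σp τb pr.2 ∧
          ¬ pr.1.Disjoint pr.2 := by
      intro pr hpr
      obtain ⟨hmem, hnd⟩ := Finset.mem_filter.1 hpr
      obtain ⟨h1, h2⟩ := Finset.mem_product.1 hmem
      exact ⟨(hPaths _ _ _).1 h1, (hPaths _ _ _).1 h2, hnd⟩
    refine Finset.sum_bij' (fun pr hpr => (cross (memA hpr).2.2).out)
      (fun pr hpr => (cross (memB hpr).2.2).out) ?_ ?_ ?_ ?_ ?_
    · intro pr hpr
      obtain ⟨h1, h2, hnd⟩ := memA hpr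
      refine Finset.mem_filter.2 ⟨Finset.mem_product.2 ⟨?_, ?_⟩, ?_⟩
      · exact (hPaths _ _ _).2 (isPath_out₁ (cross (memA hpr).2.2) h1 h2)
      · exact (hPaths _ _ _).2 (isPath_out₂ (cross (memA hpr).2.2) h1 h2)
      · exact out_not_disjoint (cross (memA hpr).2.2)
    · intro pr hpr
      obtain ⟨h1, h2, hnd⟩ := memB hpr
      refine Finset.mem_filter.2 ⟨Finset.mem_product.2 ⟨?_, ?_⟩, ?_⟩
      · exact (hPaths _ _ _).2 (isPath_out₁ (cross (memB hpr).2.2) h1 h2)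
      · exact (hPaths _ _ _).2 (isPath_out₂ (cross (memB hpr).2.2) h1 h2)
      · exact out_not_disjoint (cross (memB hpr).2.2)
    · intro pr hpr
      obtain ⟨h1, h2, hnd⟩ := memA hpr
      have hn₁ : pr.1.Nodup := path_nodup hacyc h1.1
      have hm₂ : (cross (memA hpr).2.2).out.2.Nodup :=
        path_nodup hacyc (isPath_out₂ (cross (memA hpr).2.2) h1 h2).1
      exact cross_out_involutive (memA hpr).2.2 hn₁ _ hm₂
    · intro pr hpr
      obtain ⟨h1, h2, hnd⟩ := memB hpr
      have hn₁ : pr.1.Nodup := path_nodup hacyc h1.1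
      have hm₂ : (cross (memB hpr).2.2).out.2.Nodup :=
        path_nodup hacyc (isPath_out₂ (cross (memB hpr).2.2) h1 h2).1
      exact cross_out_involutive (memB hpr).2.2 hn₁ _ hm₂
    · intro pr hpr
      congr 1
      have := key_out (cross (memA hpr).2.2)
      rw [keyF, keyF]
      rw [show ((pairs ((cross (memA hpr).2.2).out.1) : Multiset (E × E)) +
        (pairs ((cross (memA hpr).2.2).out.2) : Multiset (E × E))) =
        ((pairs pr.1 : Multiset (E × E)) + (pairs pr.2 : Multiset (E × E))) from this]
  rw [hcross]
  ring

open Classical in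
lemma ne_of_disjoint (src dst : E → V)
    (hacyc : ∀ e : E, ¬ Relation.TransGen (EdgeAdj src dst) e e)
    (Paths : E → E → Finset (List E))
    (hPaths : ∀ a b l, l ∈ Paths a b ↔ IsEdgePath src dst a b l)
    (σa σp τb τq : E) {P₁ P₂ : List E} (hP₁ : P₁ ∈ Paths σa τb) (hP₂ : P₂ ∈ Paths σp τq)
    (hdp : P₁.Disjoint P₂) :
    transferPoly F Paths σa τb * transferPoly F Paths σp τq ≠
      transferPoly F Paths σa τq * transferPoly F Paths σp τb := by
  have nodup_of : ∀ {a b : E} {l : List E}, l ∈ Paths a b → l.Nodup := by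
    intro a b l hl
    exact path_nodup hacyc ((hPaths a b l).1 hl).1
  set d₀ : (E × E) →₀ ℕ := keyF (P₁, P₂) with hd₀
  have hfA : (((Paths σa τb) ×ˢ (Paths σp τq)).filter
      (fun pr => pr.1.Disjoint pr.2)).filter (fun pr => keyF pr = d₀) = {(P₁, P₂)} := by
    apply Finset.eq_singleton_iff_unique_mem.2
    constructor
    · refine Finset.mem_filter.2 ⟨Finset.mem_filter.2
        ⟨Finset.mem_product.2 ⟨hP₁, hP₂⟩, hdp⟩, rfl⟩
    · intro q hq
      obtain ⟨hq1, hq2⟩ := Finset.mem_filter.1 hq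
      obtain ⟨hq3, hq4⟩ := Finset.mem_filter.1 hq1
      obtain ⟨hq5, hq6⟩ := Finset.mem_product.1 hq3
      have e1 := (hPaths _ _ _).1 hq5
      have e2 := (hPaths _ _ _).1 hq6
      have e3 := (hPaths _ _ _).1 hP₁
      have e4 := (hPaths _ _ _).1 hP₂
      obtain ⟨g1, g2⟩ := disjoint_pair_unique (nodup_of hq5) (nodup_of hq6)
        (nodup_of hP₁) (nodup_of hP₂) hq4 hdp
        (by rw [e1.2.1, e3.2.1]) (by rw [e2.2.1, e4.2.1]) (keyF_inj hq2)
      exact Prod.ext g1 g2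
  have hfB : (((Paths σa τq) ×ˢ (Paths σp τb)).filter
      (fun pr => pr.1.Disjoint pr.2)).filter (fun pr => keyF pr = d₀) = ∅ := by
    apply Finset.filter_eq_empty_iff.2
    intro q hq hkey
    obtain ⟨hq3, hq4⟩ := Finset.mem_filter.1 hq
    obtain ⟨hq5, hq6⟩ := Finset.mem_product.1 hq3
    have e1 := (hPaths _ _ _).1 hq5
    have e2 := (hPaths _ _ _).1 hq6
    have e3 := (hPaths _ _ _).1 hP₁
    have e4 := (hPaths _ _ _).1 hP₂
    obtain ⟨g1, g2⟩ := disjoint_pair_unique (nodup_of hq5) (nodup_of hq6)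
      (nodup_of hP₁) (nodup_of hP₂) hq4 hdp
      (by rw [e1.2.1, e3.2.1]) (by rw [e2.2.1, e4.2.1]) (keyF_inj hkey)
    -- q.1 = P₁, but q.1 ends at τq while P₁ ends at τb
    have hτ : τq = τb := by
      have h1 : q.1.getLast? = some τq := e1.2.2
      have h2 : P₁.getLast? = some τb := e3.2.2
      rw [g1, h2] at h1
      exact (Option.some.injEq _ _ ▸ h1.symm)
    have hmb : τb ∈ P₁ := mem_of_getLast?_eq e3.2.2
    have hmq : τq ∈ P₂ := mem_of_getLast?_eq e4.2.2
    exact hdp hmb (hτ ▸ hmq)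
  intro heq
  have hdiff := diff_eq src dst hacyc Paths hPaths σa σp τb τq (F := F)
  rw [heq, sub_self] at hdiff
  have hco := congrArg (MvPolynomial.coeff d₀) hdiff.symm
  rw [MvPolynomial.coeff_sub, coeff_sum_monomial, coeff_sum_monomial,
    MvPolynomial.coeff_zero] at hco
  rw [hfA, hfB] at hco
  simp at hco

end MainLemmas

/-- In a finite DAG, `m_{σaτb}·m_{σpτq} ≠ m_{σaτq}·m_{σpτb}` (as
polynomials) iff there is an edge-disjoint pair of paths `(P₁, P₂) ∈ P_{σaτb} × P_{σpτq}`
or an edge-disjoint pair `(P₃, P₄) ∈ P_{σaτq} × P_{σpτb}`. -/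
theorem transfer_product_ne_iff_disjoint_paths
    {V E F : Type*} [Fintype E] [Field F] (src dst : E → V)
    (hacyc : ∀ e : E, ¬ Relation.TransGen (EdgeAdj src dst) e e)
    (Paths : E → E → Finset (List E))
    (hPaths : ∀ a b l, l ∈ Paths a b ↔ IsEdgePath src dst a b l)
    (σa σp τb τq : E) :
    (transferPoly F Paths σa τb * transferPoly F Paths σp τq ≠
        transferPoly F Paths σa τq * transferPoly F Paths σp τb) ↔
      ((∃ P₁ ∈ Paths σa τb, ∃ P₂ ∈ Paths σp τq, P₁.Disjoint P₂) ∨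
        (∃ P₃ ∈ Paths σa τq, ∃ P₄ ∈ Paths σp τb, P₃.Disjoint P₄)) := by
  classical
  constructor
  · intro hne
    by_contra hcon
    push_neg at hcon
    obtain ⟨h1, h2⟩ := hcon
    apply hne
    have hdiff := diff_eq src dst hacyc Paths hPaths σa σp τb τq (F := F)
    have hA : ((Paths σa τb) ×ˢ (Paths σp τq)).filter
        (fun pr => pr.1.Disjoint pr.2) = ∅ := by
      apply Finset.filter_eq_empty_iff.2
      intro pr hpr
      obtain ⟨hp1, hp2⟩ := Finset.mem_product.1 hpr
      exact h1 pr.1 hp1 pr.2 hp2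
    have hB : ((Paths σa τq) ×ˢ (Paths σp τb)).filter
        (fun pr => pr.1.Disjoint pr.2) = ∅ := by
      apply Finset.filter_eq_empty_iff.2
      intro pr hpr
      obtain ⟨hp1, hp2⟩ := Finset.mem_product.1 hpr
      exact h2 pr.1 hp1 pr.2 hp2
    rw [hA, hB] at hdiff
    simp only [Finset.sum_empty, sub_zero] at hdiff
    exact sub_eq_zero.1 hdiff
  · rintro (⟨P₁, hP₁, P₂, hP₂, hdp⟩ | ⟨P₃, hP₃, P₄, hP₄, hdp⟩)
    · exact ne_of_disjoint src dst hacyc Paths hPaths σa σp τb τq hP₁ hP₂ hdp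
    · exact (ne_of_disjoint src dst hacyc Paths hPaths σa σp τq τb hP₃ hP₄ hdp).symm
end

section
/- Let η = s(x)/t(x) be a nonconstant rational function and p = u(x)/v(x) a rational function, both over a field F with gcd(s,t) = 1 and gcd(u,v) = 1, such that every variable has degree at most 1 in each of s, t and degree at most 2 in each of u, v. Suppose p = f(η)/g(η) for nonzero polynomials f, g ∈ F[z] with gcd(f, g) = 1, and suppose there is a variable x₀ and an assignment of values to all other variables under which (u, v) becomes (c₁x₀ + c₀, c₂) or (c₂, c₁x₀ + c₀) with c₁c₂ ≠ 0. Then max(deg f, deg g) = 1. -/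
set_option maxHeartbeats 1000000

section AuxUniv
open Polynomial

lemma aux_natDegree_eval₂_le {F : Type*} [Field F] {k : ℕ}
    (p : MvPolynomial (Fin k) F) (x₀ : Fin k) (a : Fin k → F) :
    (MvPolynomial.eval₂ (Polynomial.C : F →+* Polynomial F)
      (fun j => if j = x₀ then Polynomial.X else Polynomial.C (a j)) p).natDegree
      ≤ p.degreeOf x₀ := by
  rw [MvPolynomial.eval₂_eq]
  apply Polynomial.natDegree_sum_le_of_forall_le
  intro m hm
  have h1 : m x₀ ≤ p.degreeOf x₀ := by
    rw [MvPolynomial.degreeOf_eq_sup]; exact Finset.le_sup (f := fun m => m x₀) hm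
  refine le_trans (le_trans (Polynomial.natDegree_mul_le) ?_) h1
  rw [Polynomial.natDegree_C, zero_add]
  refine le_trans (Polynomial.natDegree_prod_le _ _) ?_
  have h2 : ∀ i ∈ m.support,
      ((if i = x₀ then (Polynomial.X : Polynomial F) else Polynomial.C (a i)) ^ m i).natDegree
        ≤ if i = x₀ then m i else 0 := by
    intro i _
    split_ifs with h
    · exact le_trans (Polynomial.natDegree_pow_le) (by simp)
    · exact le_trans (Polynomial.natDegree_pow_le) (by simp)
  refine le_trans (Finset.sum_le_sum h2) ?_
  rw [Finset.sum_ite_eq' m.support x₀ (fun i => m i)]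
  split_ifs <;> simp

variable {F : Type*} [Field F]

lemma aux_no_common_root {f g : Polynomial F} (hfg : IsCoprime f g) (r : F)
    (hf : f.eval r = 0) (hg : g.eval r = 0) : False := by
  obtain ⟨a, b, h⟩ := hfg
  have := congrArg (Polynomial.eval r) h
  simp [hf, hg] at this

lemma aux_sum_zero_pow {R : Type*} [CommRing R] (c : ℕ → R) (x : ℕ → R) (d : ℕ) :
    ∑ i ∈ Finset.range (d + 1), c i * x i * (0 : R) ^ (d - i) = c d * x d := by
  rw [Finset.sum_range_succ, Finset.sum_eq_zero, zero_add, Nat.sub_self, pow_zero, mul_one]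
  intro i hi
  rw [zero_pow (by have := Finset.mem_range.mp hi; omega), mul_zero]

lemma aux_sum_proportional (p : Polynomial F) (τ : Polynomial F) (lam : F) (d : ℕ)
    (hpd : p.natDegree ≤ d) :
    ∑ i ∈ Finset.range (d + 1), C (p.coeff i) * (C lam * τ) ^ i * τ ^ (d - i)
      = C (p.eval lam) * τ ^ d := by
  rw [Polynomial.eval_eq_sum_range' (Nat.lt_succ_of_le hpd), map_sum, Finset.sum_mul]
  refine Finset.sum_congr rfl fun i hi => ?_
  have hi' : i ≤ d := Nat.lt_succ_iff.mp (Finset.mem_range.mp hi)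
  have hpow : τ ^ i * τ ^ (d - i) = τ ^ d := by rw [← pow_add]; congr 1; omega
  rw [C_mul, map_pow, mul_pow, ← hpow]; ring

lemma aux_sum_eval (p : Polynomial F) (d : ℕ) (hpd : p.natDegree ≤ d) (A Cc : F)
    (hC : Cc ≠ 0) :
    ∑ i ∈ Finset.range (d + 1), p.coeff i * A ^ i * Cc ^ (d - i)
      = Cc ^ d * p.eval (A / Cc) := by
  rw [Polynomial.eval_eq_sum_range' (Nat.lt_succ_of_le hpd), Finset.mul_sum]
  refine Finset.sum_congr rfl fun i hi => ?_
  have hi' : i ≤ d := Nat.lt_succ_iff.mp (Finset.mem_range.mp hi)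
  have hpow : Cc ^ d = Cc ^ (d - i) * Cc ^ i := by rw [← pow_add]; congr 1; omega
  rw [div_pow, hpow]
  field_simp

lemma aux_coeff_top (p σ τ : Polynomial F) (d : ℕ) (hσ : σ.natDegree ≤ 1)
    (hτ : τ.natDegree ≤ 1) :
    (∑ i ∈ Finset.range (d + 1), C (p.coeff i) * σ ^ i * τ ^ (d - i)).coeff d
      = ∑ i ∈ Finset.range (d + 1), p.coeff i * σ.coeff 1 ^ i * τ.coeff 1 ^ (d - i) := by
  rw [Polynomial.finset_sum_coeff]
  refine Finset.sum_congr rfl fun i hi => ?_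
  have hi' : i ≤ d := Nat.lt_succ_iff.mp (Finset.mem_range.mp hi)
  have h1 : (σ ^ i).natDegree ≤ i := by
    refine le_trans (Polynomial.natDegree_pow_le) ?_
    calc i * σ.natDegree ≤ i * 1 := Nat.mul_le_mul_left i hσ
    _ = i := mul_one i
  have h2 : (τ ^ (d - i)).natDegree ≤ d - i := by
    refine le_trans (Polynomial.natDegree_pow_le) ?_
    calc (d - i) * τ.natDegree ≤ (d - i) * 1 := Nat.mul_le_mul_left _ hτ
    _ = d - i := mul_one _
  have hcσ : (σ ^ i).coeff i = σ.coeff 1 ^ i := by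
    have := Polynomial.coeff_pow_of_natDegree_le (m := i) hσ
    simpa using this
  have hcτ : (τ ^ (d - i)).coeff (d - i) = τ.coeff 1 ^ (d - i) := by
    have := Polynomial.coeff_pow_of_natDegree_le (m := d - i) hτ
    simpa using this
  rw [mul_assoc, Polynomial.coeff_C_mul, mul_assoc]
  congr 1
  calc (σ ^ i * τ ^ (d - i)).coeff d = (σ ^ i * τ ^ (d - i)).coeff (i + (d - i)) := by
        congr 1; omega
    _ = (σ ^ i).coeff i * (τ ^ (d - i)).coeff (d - i) :=
        Polynomial.coeff_mul_add_eq_of_natDegree_le h1 h2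
    _ = σ.coeff 1 ^ i * τ.coeff 1 ^ (d - i) := by rw [hcσ, hcτ]

lemma aux_dep_case (σ τ : Polynomial F) (hσ : σ.natDegree ≤ 1) (hτ : τ.natDegree ≤ 1)
    (h : σ.coeff 1 * τ.coeff 0 - σ.coeff 0 * τ.coeff 1 = 0) :
    τ = 0 ∨ ∃ lam, σ = C lam * τ := by
  set A := σ.coeff 1 with hA
  set B := σ.coeff 0 with hB
  set Cc := τ.coeff 1 with hCc
  set D := τ.coeff 0 with hD
  have hσe := Polynomial.eq_X_add_C_of_natDegree_le_one hσ
  have hτe := Polynomial.eq_X_add_C_of_natDegree_le_one hτ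
  rw [← hA, ← hB] at hσe
  rw [← hCc, ← hD] at hτe
  by_cases hC0 : Cc = 0
  · by_cases hD0 : D = 0
    · left
      rw [hτe, hC0, hD0]
      simp
    · right
      refine ⟨B / D, ?_⟩
      have hA0 : A = 0 := by
        rw [hC0, mul_zero, sub_zero] at h
        exact (mul_eq_zero.mp h).resolve_right hD0
      rw [hσe, hτe, hA0, hC0]
      simp only [map_zero, zero_mul, zero_add, mul_add, ← C_mul]
      rw [div_mul_cancel₀ _ hD0]
  · right
    refine ⟨A / Cc, ?_⟩
    have hBeq : B = A / Cc * D := by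
      field_simp
      linear_combination -h
    rw [hσe, hτe, mul_add, ← mul_assoc, ← C_mul, div_mul_cancel₀ _ hC0, ← C_mul, ← hBeq]

lemma aux_final (f g σ τ : Polynomial F) (d : ℕ)
    (hfg : IsCoprime f g)
    (hσ : σ.natDegree ≤ 1) (hτ : τ.natDegree ≤ 1)
    (hd1 : 1 ≤ d) (hdf : f.natDegree ≤ d) (hdg : g.natDegree ≤ d)
    (hlead : f.coeff d ≠ 0 ∨ g.coeff d ≠ 0)
    (hP : (∑ i ∈ Finset.range (d + 1), C (f.coeff i) * σ ^ i * τ ^ (d - i)).natDegree = 1)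
    (hQ0 : (∑ i ∈ Finset.range (d + 1), C (g.coeff i) * σ ^ i * τ ^ (d - i)) ≠ 0)
    (hQ : (∑ i ∈ Finset.range (d + 1), C (g.coeff i) * σ ^ i * τ ^ (d - i)).natDegree = 0) :
    d = 1 := by
  by_cases hdep : σ.coeff 1 * τ.coeff 0 - σ.coeff 0 * τ.coeff 1 = 0
  · rcases aux_dep_case σ τ hσ hτ hdep with hτ0 | ⟨lam, hlam⟩
    · rw [hτ0] at hP hQ0 hQ
      have hPe : ∑ i ∈ Finset.range (d + 1), C (f.coeff i) * σ ^ i * (0 : F[X]) ^ (d - i)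
          = C (f.coeff d) * σ ^ d :=
        aux_sum_zero_pow (fun i => C (f.coeff i)) (fun i => σ ^ i) d
      have hQe : ∑ i ∈ Finset.range (d + 1), C (g.coeff i) * σ ^ i * (0 : F[X]) ^ (d - i)
          = C (g.coeff d) * σ ^ d :=
        aux_sum_zero_pow (fun i => C (g.coeff i)) (fun i => σ ^ i) d
      rw [hPe] at hP
      rw [hQe] at hQ0 hQ
      have hgd : g.coeff d ≠ 0 := fun h => hQ0 (by rw [h]; simp)
      rw [Polynomial.natDegree_C_mul hgd] at hQ
      have : (C (f.coeff d) * σ ^ d).natDegree ≤ 0 := by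
        refine le_trans (Polynomial.natDegree_mul_le) ?_
        simp [hQ]
      omega
    · rw [hlam] at hP hQ0 hQ
      rw [aux_sum_proportional f τ lam d hdf] at hP
      rw [aux_sum_proportional g τ lam d hdg] at hQ0 hQ
      have hgl : g.eval lam ≠ 0 := fun h => hQ0 (by rw [h]; simp)
      rw [Polynomial.natDegree_C_mul hgl] at hQ
      have : (C (f.eval lam) * τ ^ d).natDegree ≤ 0 := by
        refine le_trans (Polynomial.natDegree_mul_le) ?_
        simp [hQ]
      omega
  · have hlead2 : (∑ i ∈ Finset.range (d + 1), C (f.coeff i) * σ ^ i * τ ^ (d - i)).coeff d ≠ 0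
        ∨ (∑ i ∈ Finset.range (d + 1), C (g.coeff i) * σ ^ i * τ ^ (d - i)).coeff d ≠ 0 := by
      rw [aux_coeff_top f σ τ d hσ hτ, aux_coeff_top g σ τ d hσ hτ]
      by_cases hCc : τ.coeff 1 = 0
      · have hAD : σ.coeff 1 * τ.coeff 0 ≠ 0 := by
          intro h; apply hdep; rw [hCc, h]; ring
        have hA : σ.coeff 1 ≠ 0 := left_ne_zero_of_mul hAD
        rw [hCc]
        rw [aux_sum_zero_pow (fun i => f.coeff i) (fun i => σ.coeff 1 ^ i) d,
          aux_sum_zero_pow (fun i => g.coeff i) (fun i => σ.coeff 1 ^ i) d]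
        rcases hlead with h | h
        · exact Or.inl (mul_ne_zero h (pow_ne_zero d hA))
        · exact Or.inr (mul_ne_zero h (pow_ne_zero d hA))
      · by_contra hcon
        push_neg at hcon
        obtain ⟨h1, h2⟩ := hcon
        rw [aux_sum_eval f d hdf _ _ hCc] at h1
        rw [aux_sum_eval g d hdg _ _ hCc] at h2
        have hf' : f.eval (σ.coeff 1 / τ.coeff 1) = 0 :=
          (mul_eq_zero.mp h1).resolve_left (pow_ne_zero d hCc)
        have hg' : g.eval (σ.coeff 1 / τ.coeff 1) = 0 :=
          (mul_eq_zero.mp h2).resolve_left (pow_ne_zero d hCc)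
        exact aux_no_common_root hfg _ hf' hg'
    rcases hlead2 with h | h
    · have := Polynomial.le_natDegree_of_ne_zero h
      omega
    · have := Polynomial.le_natDegree_of_ne_zero h
      omega

end AuxUniv

section AuxMv

variable {F : Type*} [Field F] {k : ℕ}

lemma aux_hom (s t : MvPolynomial (Fin k) F) (ht0 : t ≠ 0) (p : Polynomial F) (e : ℕ)
    (hpe : p.natDegree ≤ e) :
    algebraMap (MvPolynomial (Fin k) F) (FractionRing (MvPolynomial (Fin k) F))
      (∑ i ∈ Finset.range (e + 1), MvPolynomial.C (p.coeff i) * s ^ i * t ^ (e - i))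
    = Polynomial.eval₂
        ((algebraMap (MvPolynomial (Fin k) F) (FractionRing (MvPolynomial (Fin k) F))).comp
          (MvPolynomial.C))
        (algebraMap (MvPolynomial (Fin k) F) (FractionRing (MvPolynomial (Fin k) F)) s /
          algebraMap (MvPolynomial (Fin k) F) (FractionRing (MvPolynomial (Fin k) F)) t) p
      * (algebraMap (MvPolynomial (Fin k) F) (FractionRing (MvPolynomial (Fin k) F)) t) ^ e := by
  set ι := algebraMap (MvPolynomial (Fin k) F) (FractionRing (MvPolynomial (Fin k) F)) with hι
  have ht : ι t ≠ 0 := fun h => ht0 (IsFractionRing.injective (MvPolynomial (Fin k) F)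
    (FractionRing (MvPolynomial (Fin k) F)) (show ι t = ι 0 by rw [h, map_zero]))
  rw [Polynomial.eval₂_eq_sum_range' _ (Nat.lt_succ_of_le hpe), map_sum, Finset.sum_mul]
  refine Finset.sum_congr rfl fun i hi => ?_
  have hi' : i ≤ e := Nat.lt_succ_iff.mp (Finset.mem_range.mp hi)
  rw [map_mul, map_mul, map_pow, map_pow, RingHom.comp_apply]
  have hpow : ι t ^ e = ι t ^ i * ι t ^ (e - i) := by rw [← pow_add]; congr 1; omega
  rw [div_pow, hpow]
  field_simp

lemma aux_key (s t : MvPolynomial (Fin k) F) (ht0 : t ≠ 0) (f g : Polynomial F)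
    (hfg : IsCoprime f g) (d : ℕ) (hdf : f.natDegree ≤ d) (hdg : g.natDegree ≤ d) :
    ∃ (A B : MvPolynomial (Fin k) F) (N : ℕ),
      A * (∑ i ∈ Finset.range (d + 1), MvPolynomial.C (f.coeff i) * s ^ i * t ^ (d - i))
        + B * (∑ i ∈ Finset.range (d + 1), MvPolynomial.C (g.coeff i) * s ^ i * t ^ (d - i))
        = t ^ N := by
  obtain ⟨a, b, hab⟩ := hfg
  set m := max a.natDegree b.natDegree with hm
  refine ⟨∑ i ∈ Finset.range (m + 1), MvPolynomial.C (a.coeff i) * s ^ i * t ^ (m - i),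
    ∑ i ∈ Finset.range (m + 1), MvPolynomial.C (b.coeff i) * s ^ i * t ^ (m - i), m + d, ?_⟩
  apply IsFractionRing.injective (MvPolynomial (Fin k) F)
    (FractionRing (MvPolynomial (Fin k) F))
  set ι := algebraMap (MvPolynomial (Fin k) F) (FractionRing (MvPolynomial (Fin k) F)) with hι
  set η := ι s / ι t with hη
  set E : Polynomial F → FractionRing (MvPolynomial (Fin k) F) :=
    fun p => Polynomial.eval₂ (ι.comp MvPolynomial.C) η p with hE
  have hEadd : ∀ p q : Polynomial F, E (p + q) = E p + E q := fun p q => Polynomial.eval₂_add _ _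
  have hEmul : ∀ p q : Polynomial F, E (p * q) = E p * E q := fun p q => Polynomial.eval₂_mul _ _
  have hEone : E 1 = 1 := Polynomial.eval₂_one _ _
  rw [ι.map_add, ι.map_mul, ι.map_mul, ι.map_pow]
  rw [aux_hom s t ht0 a m (le_max_left _ _), aux_hom s t ht0 b m (le_max_right _ _),
    aux_hom s t ht0 f d hdf, aux_hom s t ht0 g d hdg]
  have hfin : E a * E f + E b * E g = 1 := by
    rw [← hEmul, ← hEmul, ← hEadd, hab, hEone]
  calc E a * ι t ^ m * (E f * ι t ^ d) + E b * ι t ^ m * (E g * ι t ^ d)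
      = (E a * E f + E b * E g) * (ι t ^ m * ι t ^ d) := by ring
    _ = ι t ^ (m + d) := by rw [hfin, one_mul, ← pow_add]

lemma aux_relprime (s t : MvPolynomial (Fin k) F) (ht0 : t ≠ 0)
    (hst : ∀ w : MvPolynomial (Fin k) F, w ∣ s → w ∣ t → IsUnit w)
    (f g : Polynomial F) (d : ℕ) (hd1 : 1 ≤ d)
    (hlead : f.coeff d ≠ 0 ∨ g.coeff d ≠ 0)
    (A B : MvPolynomial (Fin k) F) (N : ℕ)
    (hkey : A * (∑ i ∈ Finset.range (d + 1), MvPolynomial.C (f.coeff i) * s ^ i * t ^ (d - i))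
        + B * (∑ i ∈ Finset.range (d + 1), MvPolynomial.C (g.coeff i) * s ^ i * t ^ (d - i))
        = t ^ N)
    (hF0 : (∑ i ∈ Finset.range (d + 1), MvPolynomial.C (f.coeff i) * s ^ i * t ^ (d - i)) ≠ 0) :
    IsRelPrime (∑ i ∈ Finset.range (d + 1), MvPolynomial.C (f.coeff i) * s ^ i * t ^ (d - i))
      (∑ i ∈ Finset.range (d + 1), MvPolynomial.C (g.coeff i) * s ^ i * t ^ (d - i)) := by
  intro w hwF hwG
  by_contra hwu
  have hw0 : w ≠ 0 := ne_zero_of_dvd_ne_zero hF0 hwF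
  obtain ⟨q, hqi, hqw⟩ := WfDvdMonoid.exists_irreducible_factor hwu hw0
  have hq : Prime q := (UniqueFactorizationMonoid.irreducible_iff_prime).mp hqi
  have hqF := hqw.trans hwF
  have hqG := hqw.trans hwG
  have hqt : q ∣ t := by
    refine hq.dvd_of_dvd_pow (n := N) ?_
    rw [← hkey]
    exact dvd_add (hqF.mul_left A) (hqG.mul_left B)
  have hsplit : ∀ p : Polynomial F,
      q ∣ (∑ i ∈ Finset.range (d + 1), MvPolynomial.C (p.coeff i) * s ^ i * t ^ (d - i)) →
      q ∣ MvPolynomial.C (p.coeff d) * s ^ d := by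
    intro p hp
    have htR : t ∣ ∑ i ∈ Finset.range d, MvPolynomial.C (p.coeff i) * s ^ i * t ^ (d - i) := by
      refine Finset.dvd_sum fun i hi => ?_
      exact (dvd_pow_self t (by have := Finset.mem_range.mp hi; omega)).mul_left _
    have heqs : MvPolynomial.C (p.coeff d) * s ^ d
        = (∑ i ∈ Finset.range (d + 1), MvPolynomial.C (p.coeff i) * s ^ i * t ^ (d - i))
          - (∑ i ∈ Finset.range d, MvPolynomial.C (p.coeff i) * s ^ i * t ^ (d - i)) := by
      rw [Finset.sum_range_succ, Nat.sub_self, pow_zero, mul_one]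
      ring
    rw [heqs]
    exact dvd_sub hp (hqt.trans htR)
  have hqs : q ∣ s := by
    have hqsd : q ∣ s ^ d := by
      rcases hlead with h | h
      · have h1 := hsplit f hqF
        have h2 : (s : MvPolynomial (Fin k) F) ^ d
            = MvPolynomial.C (f.coeff d)⁻¹ * (MvPolynomial.C (f.coeff d) * s ^ d) := by
          rw [← mul_assoc, ← MvPolynomial.C_mul, inv_mul_cancel₀ h, MvPolynomial.C_1, one_mul]
        rw [h2]
        exact h1.mul_left _
      · have h1 := hsplit g hqG
        have h2 : (s : MvPolynomial (Fin k) F) ^ d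
            = MvPolynomial.C (g.coeff d)⁻¹ * (MvPolynomial.C (g.coeff d) * s ^ d) := by
          rw [← mul_assoc, ← MvPolynomial.C_mul, inv_mul_cancel₀ h, MvPolynomial.C_1, one_mul]
        rw [h2]
        exact h1.mul_left _
    exact hq.dvd_of_dvd_pow hqsd
  exact hq.not_unit (hst q hqs hqt)

end AuxMv

open MvPolynomial

/-- **degree-counting step.** Let `η = s/t` be a nonconstant rational
function and `p = u/v` a rational function in variables `x₁,…,xₖ` over `F`, with
`gcd(s,t) = 1`, `gcd(u,v) = 1`, every variable of degree at most `1` in `s, t` and at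
most `2` in `u, v`. Suppose `p = f(η)/g(η)` for coprime nonzero `f, g ∈ F[z]`
(i.e. `u·g(s/t)·t^d = v·f(s/t)·t^d` with `d = max(deg f, deg g)`), and suppose there is a
variable `x₀` and an assignment of values to all other variables under which `(u, v)`
becomes `(c₁x₀ + c₀, c₂)` or `(c₂, c₁x₀ + c₀)` with `c₁c₂ ≠ 0`. Then
`max(deg f, deg g) = 1`. -/
theorem deg_f_g_eq_one
    {F : Type*} [Field F] {k : ℕ}
    (s t u v : MvPolynomial (Fin k) F) (f g : Polynomial F)
    (hs0 : s ≠ 0) (ht0 : t ≠ 0) (hu0 : u ≠ 0) (hv0 : v ≠ 0)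
    (hf0 : f ≠ 0) (hg0 : g ≠ 0)
    (hst : ∀ d : MvPolynomial (Fin k) F, d ∣ s → d ∣ t → IsUnit d)
    (huv : ∀ d : MvPolynomial (Fin k) F, d ∣ u → d ∣ v → IsUnit d)
    (hfg : IsCoprime f g)
    (hds : ∀ x, MvPolynomial.degreeOf x s ≤ 1)
    (hdt : ∀ x, MvPolynomial.degreeOf x t ≤ 1)
    (hdu : ∀ x, MvPolynomial.degreeOf x u ≤ 2)
    (hdv : ∀ x, MvPolynomial.degreeOf x v ≤ 2)
    (hnonconst : ∀ c : F, s ≠ MvPolynomial.C c * t)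
    (heq : u * (∑ i ∈ Finset.range (max f.natDegree g.natDegree + 1),
          MvPolynomial.C (g.coeff i) * s ^ i * t ^ (max f.natDegree g.natDegree - i)) =
        v * (∑ i ∈ Finset.range (max f.natDegree g.natDegree + 1),
          MvPolynomial.C (f.coeff i) * s ^ i * t ^ (max f.natDegree g.natDegree - i)))
    (hlin : ∃ (x₀ : Fin k) (a : Fin k → F) (c₀ c₁ c₂ : F), c₁ ≠ 0 ∧ c₂ ≠ 0 ∧
      ((MvPolynomial.eval₂ (Polynomial.C : F →+* Polynomial F)
            (fun j => if j = x₀ then Polynomial.X else Polynomial.C (a j)) u =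
          Polynomial.C c₁ * Polynomial.X + Polynomial.C c₀ ∧
        MvPolynomial.eval₂ (Polynomial.C : F →+* Polynomial F)
            (fun j => if j = x₀ then Polynomial.X else Polynomial.C (a j)) v =
          Polynomial.C c₂) ∨
       (MvPolynomial.eval₂ (Polynomial.C : F →+* Polynomial F)
            (fun j => if j = x₀ then Polynomial.X else Polynomial.C (a j)) u =
          Polynomial.C c₂ ∧
        MvPolynomial.eval₂ (Polynomial.C : F →+* Polynomial F)
            (fun j => if j = x₀ then Polynomial.X else Polynomial.C (a j)) v =
          Polynomial.C c₁ * Polynomial.X + Polynomial.C c₀))) :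
    max f.natDegree g.natDegree = 1 := by
  classical
  obtain ⟨x₀, a₀, c₀, c₁, c₂, hc₁, hc₂, hcase⟩ := hlin
  set φ : MvPolynomial (Fin k) F →+* Polynomial F :=
    MvPolynomial.eval₂Hom (Polynomial.C)
      (fun j => if j = x₀ then Polynomial.X else Polynomial.C (a₀ j)) with hφdef
  have hcase' : ((φ u = Polynomial.C c₁ * Polynomial.X + Polynomial.C c₀ ∧
        φ v = Polynomial.C c₂) ∨
      (φ u = Polynomial.C c₂ ∧
        φ v = Polynomial.C c₁ * Polynomial.X + Polynomial.C c₀)) := hcase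
  clear hcase
  set d := max f.natDegree g.natDegree with hd
  have hdf : f.natDegree ≤ d := le_max_left _ _
  have hdg : g.natDegree ≤ d := le_max_right _ _
  have hlead : f.coeff d ≠ 0 ∨ g.coeff d ≠ 0 := by
    rcases max_choice f.natDegree g.natDegree with h | h
    · left
      rw [hd, h]
      have := Polynomial.leadingCoeff_ne_zero.mpr hf0
      rwa [Polynomial.leadingCoeff] at this
    · right
      rw [hd, h]
      have := Polynomial.leadingCoeff_ne_zero.mpr hg0
      rwa [Polynomial.leadingCoeff] at this
  set σ := φ s with hσdef
  set τ := φ t with hτdef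
  have hσ1 : σ.natDegree ≤ 1 := le_trans (aux_natDegree_eval₂_le s x₀ a₀) (hds x₀)
  have hτ1 : τ.natDegree ≤ 1 := le_trans (aux_natDegree_eval₂_le t x₀ a₀) (hdt x₀)
  have hφsum : ∀ (p : Polynomial F) (e : ℕ),
      φ (∑ i ∈ Finset.range (e + 1), MvPolynomial.C (p.coeff i) * s ^ i * t ^ (e - i))
        = ∑ i ∈ Finset.range (e + 1), Polynomial.C (p.coeff i) * σ ^ i * τ ^ (e - i) := by
    intro p e
    rw [map_sum]
    refine Finset.sum_congr rfl fun i _ => ?_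
    rw [map_mul, map_mul, map_pow, map_pow, MvPolynomial.eval₂Hom_C]
  have hd1 : 1 ≤ d := by
    by_contra hcon
    push_neg at hcon
    have hd0 : d = 0 := by omega
    have hfc : f.coeff 0 ≠ 0 := by
      have h0 : f.natDegree = 0 := by omega
      have := Polynomial.leadingCoeff_ne_zero.mpr hf0
      rwa [Polynomial.leadingCoeff, h0] at this
    have hgc : g.coeff 0 ≠ 0 := by
      have h0 : g.natDegree = 0 := by omega
      have := Polynomial.leadingCoeff_ne_zero.mpr hg0
      rwa [Polynomial.leadingCoeff, h0] at this
    have heq' := congrArg φ heq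
    rw [map_mul, map_mul, hφsum g d, hφsum f d, hd0] at heq'
    simp only [zero_add, Finset.sum_range_one, pow_zero, mul_one, Nat.sub_self] at heq'
    rcases hcase' with ⟨hu', hv'⟩ | ⟨hu', hv'⟩
    · rw [hu', hv'] at heq'
      have h5 := congrArg (fun p : Polynomial F => p.coeff 1) heq'
      simp only [Polynomial.coeff_mul_C, Polynomial.coeff_add, Polynomial.coeff_C_mul,
        Polynomial.coeff_X_one, Polynomial.coeff_C, mul_one] at h5
      simp only [one_ne_zero, if_false, add_zero, zero_mul] at h5
      exact hgc ((mul_eq_zero.mp h5).resolve_left hc₁)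
    · rw [hu', hv'] at heq'
      have h5 := congrArg (fun p : Polynomial F => p.coeff 1) heq'
      simp only [Polynomial.coeff_mul_C, Polynomial.coeff_add, Polynomial.coeff_C_mul,
        Polynomial.coeff_X_one, Polynomial.coeff_C, mul_one] at h5
      simp only [one_ne_zero, if_false, add_zero, zero_mul] at h5
      exact hfc ((mul_eq_zero.mp h5.symm).resolve_left hc₁)
  obtain ⟨A, B, N, hkey⟩ := aux_key s t ht0 f g hfg d hdf hdg
  set Fh := ∑ i ∈ Finset.range (d + 1), MvPolynomial.C (f.coeff i) * s ^ i * t ^ (d - i)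
    with hFhdef
  set Gh := ∑ i ∈ Finset.range (d + 1), MvPolynomial.C (g.coeff i) * s ^ i * t ^ (d - i)
    with hGhdef
  have hF0 : Fh ≠ 0 := by
    intro h
    rw [h, mul_zero] at heq
    have hG0' : Gh = 0 := (mul_eq_zero.mp heq).resolve_left hu0
    rw [h, hG0', mul_zero, mul_zero, add_zero] at hkey
    exact pow_ne_zero N ht0 hkey.symm
  have hG0 : Gh ≠ 0 := by
    intro h
    rw [h, mul_zero] at heq
    exact hF0 ((mul_eq_zero.mp heq.symm).resolve_left hv0)
  have hrel : IsRelPrime Fh Gh := aux_relprime s t ht0 hst f g d hd1 hlead A B N hkey hF0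
  have huvrel : IsRelPrime u v := huv
  have h1 : Fh ∣ u := hrel.dvd_of_dvd_mul_left ⟨v, by rw [mul_comm Gh u, heq, mul_comm v Fh]⟩
  have h2 : u ∣ Fh := huvrel.dvd_of_dvd_mul_left ⟨Gh, heq.symm⟩
  obtain ⟨w, hw⟩ := associated_of_dvd_dvd h1 h2
  have hveq : v = ↑w * Gh := by
    apply mul_left_cancel₀ hF0
    calc Fh * v = v * Fh := mul_comm _ _
      _ = u * Gh := heq.symm
      _ = Fh * ↑w * Gh := by rw [hw]
      _ = Fh * (↑w * Gh) := by ring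
  obtain ⟨e, he, hCe⟩ := Polynomial.isUnit_iff.mp (w.isUnit.map φ)
  have he0 : e ≠ 0 := he.ne_zero
  have hFσ := hφsum f d
  have hGσ := hφsum g d
  rcases hcase' with ⟨hu', hv'⟩ | ⟨hu', hv'⟩
  · have h3 : (∑ i ∈ Finset.range (d + 1), Polynomial.C (f.coeff i) * σ ^ i * τ ^ (d - i))
        * Polynomial.C e = Polynomial.C c₁ * Polynomial.X + Polynomial.C c₀ := by
      rw [← hFσ, hCe, ← map_mul, hw, hu']
    have hP1 : (∑ i ∈ Finset.range (d + 1),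
        Polynomial.C (f.coeff i) * σ ^ i * τ ^ (d - i)).natDegree = 1 := by
      have h6 := congrArg Polynomial.natDegree h3
      rwa [Polynomial.natDegree_mul_C he0, Polynomial.natDegree_linear hc₁] at h6
    have h4 : Polynomial.C e * (∑ i ∈ Finset.range (d + 1),
        Polynomial.C (g.coeff i) * σ ^ i * τ ^ (d - i)) = Polynomial.C c₂ := by
      rw [← hGσ, hCe, ← map_mul, ← hveq, hv']
    have hQc : (∑ i ∈ Finset.range (d + 1),
        Polynomial.C (g.coeff i) * σ ^ i * τ ^ (d - i)) = Polynomial.C (e⁻¹ * c₂) := by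
      apply mul_left_cancel₀ (Polynomial.C_ne_zero.mpr he0)
      rw [h4, ← Polynomial.C_mul]
      congr 1
      field_simp
    have hQ0' : (∑ i ∈ Finset.range (d + 1),
        Polynomial.C (g.coeff i) * σ ^ i * τ ^ (d - i)) ≠ 0 := by
      rw [hQc]
      exact Polynomial.C_ne_zero.mpr (mul_ne_zero (inv_ne_zero he0) hc₂)
    have hQn : (∑ i ∈ Finset.range (d + 1),
        Polynomial.C (g.coeff i) * σ ^ i * τ ^ (d - i)).natDegree = 0 := by
      rw [hQc]
      exact Polynomial.natDegree_C _
    exact aux_final f g σ τ d hfg hσ1 hτ1 hd1 hdf hdg hlead hP1 hQ0' hQn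
  · have h3 : Polynomial.C e * (∑ i ∈ Finset.range (d + 1),
        Polynomial.C (g.coeff i) * σ ^ i * τ ^ (d - i))
        = Polynomial.C c₁ * Polynomial.X + Polynomial.C c₀ := by
      rw [← hGσ, hCe, ← map_mul, ← hveq, hv']
    have hQ1 : (∑ i ∈ Finset.range (d + 1),
        Polynomial.C (g.coeff i) * σ ^ i * τ ^ (d - i)).natDegree = 1 := by
      have h6 := congrArg Polynomial.natDegree h3
      rwa [Polynomial.natDegree_C_mul he0, Polynomial.natDegree_linear hc₁] at h6
    have h4 : (∑ i ∈ Finset.range (d + 1),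
        Polynomial.C (f.coeff i) * σ ^ i * τ ^ (d - i)) * Polynomial.C e
        = Polynomial.C c₂ := by
      rw [← hFσ, hCe, ← map_mul, hw, hu']
    have hPc : (∑ i ∈ Finset.range (d + 1),
        Polynomial.C (f.coeff i) * σ ^ i * τ ^ (d - i)) = Polynomial.C (c₂ * e⁻¹) := by
      apply mul_right_cancel₀ (Polynomial.C_ne_zero.mpr he0)
      rw [h4, ← Polynomial.C_mul]
      congr 1
      field_simp
    have hP0' : (∑ i ∈ Finset.range (d + 1),
        Polynomial.C (f.coeff i) * σ ^ i * τ ^ (d - i)) ≠ 0 := by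
      rw [hPc]
      exact Polynomial.C_ne_zero.mpr (mul_ne_zero hc₂ (inv_ne_zero he0))
    have hPn : (∑ i ∈ Finset.range (d + 1),
        Polynomial.C (f.coeff i) * σ ^ i * τ ^ (d - i)).natDegree = 0 := by
      rw [hPc]
      exact Polynomial.natDegree_C _
    exact aux_final g f σ τ d hfg.symm hσ1 hτ1 hd1 hdg hdf hlead.symm hQ1 hP0' hPn
end

section
/- Consider a 3-user interference alignment problem over a field K: diagonal N×N matrices M_{ji} (j, i ∈ {1,2,3}) with nonzero diagonal entries, N = 2n+1, and precoding matrices V₁ = (w, Tw, …, Tⁿw), V₂ = M₁₃M₂₃⁻¹(w, Tw, …, T^{n-1}w), V₃ = M₁₂M₃₂⁻¹(Tw, T²w, …, Tⁿw), where T = M₁₃M₂₁M₃₂M₁₂⁻¹M₂₃⁻¹M₃₁⁻¹ and w is the all-ones column vector of length 2n+1. Then these matrices satisfy the alignment conditions: span(M₂₁V₂) = span(M₃₁V₃), span(M₃₂V₃) ⊆ span(M₁₂V₁), and span(M₂₃V₂) ⊆ span(M₁₃V₁). -/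
open Matrix

/-- The column span of a matrix: the `K`-linear span of its columns. -/
def colSpan {K : Type*} [Field K] {N m : ℕ}
    (A : Matrix (Fin N) (Fin m) K) : Submodule K (Fin N → K) :=
  Submodule.span K (Set.range Aᵀ)

/-- **Cadambe–Jafar precoding matrices satisfy the alignment conditions.**
Let `M j i` (for `j, i ∈ {0,1,2}`, with `M j i` playing the role of `M_{(j+1)(i+1)}`) be
diagonal `(2n+1)×(2n+1)` matrices over a field `K` with nonzero diagonal entries. With
`T = M₁₃M₂₁M₃₂M₁₂⁻¹M₂₃⁻¹M₃₁⁻¹`, `w` the all-ones vector, and precoding matrices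
`V₁ = (w, Tw, …, Tⁿw)`, `V₂ = M₁₃M₂₃⁻¹(w, …, T^{n-1}w)`, `V₃ = M₁₂M₃₂⁻¹(Tw, …, Tⁿw)`:
`span(M₂₁V₂) = span(M₃₁V₃)`, `span(M₃₂V₃) ⊆ span(M₁₂V₁)` and
`span(M₂₃V₂) ⊆ span(M₁₃V₁)`. -/
theorem alignment_conditions_hold
    {K : Type*} [Field K] (n : ℕ)
    (M : Fin 3 → Fin 3 → Matrix (Fin (2 * n + 1)) (Fin (2 * n + 1)) K)
    (hdiag : ∀ j i, (M j i).IsDiag)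
    (hnz : ∀ j i a, M j i a a ≠ 0) :
    let T : Matrix (Fin (2 * n + 1)) (Fin (2 * n + 1)) K :=
      M 0 2 * M 1 0 * M 2 1 * (M 0 1)⁻¹ * (M 1 2)⁻¹ * (M 2 0)⁻¹
    let w : Fin (2 * n + 1) → K := fun _ => 1
    let V₁ : Matrix (Fin (2 * n + 1)) (Fin (n + 1)) K :=
      Matrix.of fun r c => (T ^ (c : ℕ)).mulVec w r
    let V₂ : Matrix (Fin (2 * n + 1)) (Fin n) K :=
      Matrix.of fun r c => (M 0 2 * (M 1 2)⁻¹ * T ^ (c : ℕ)).mulVec w r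
    let V₃ : Matrix (Fin (2 * n + 1)) (Fin n) K :=
      Matrix.of fun r c => (M 0 1 * (M 2 1)⁻¹ * T ^ ((c : ℕ) + 1)).mulVec w r
    colSpan (M 1 0 * V₂) = colSpan (M 2 0 * V₃) ∧
      colSpan (M 2 1 * V₃) ≤ colSpan (M 0 1 * V₁) ∧
      colSpan (M 1 2 * V₂) ≤ colSpan (M 0 2 * V₁) := by
  intro T w V₁ V₂ V₃
  set d : Fin 3 → Fin 3 → Fin (2 * n + 1) → K := fun j i a => M j i a a with hd
  have hMd : ∀ j i, M j i = diagonal (d j i) := fun j i => ((hdiag j i).diagonal_diag).symm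
  have hinv : ∀ j i, (M j i)⁻¹ = diagonal (fun a => (d j i a)⁻¹) := by
    intro j i
    apply Matrix.inv_eq_right_inv
    rw [hMd j i, diagonal_mul_diagonal]
    rw [show (fun a => d j i a * (d j i a)⁻¹) = fun _ : Fin (2*n+1) => (1:K) from
      funext fun a => mul_inv_cancel₀ (hnz j i a), diagonal_one]
  set t : Fin (2 * n + 1) → K := fun a =>
    d 0 2 a * d 1 0 a * d 2 1 a * (d 0 1 a)⁻¹ * (d 1 2 a)⁻¹ * (d 2 0 a)⁻¹ with ht
  have hT : T = diagonal t := by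
    show M 0 2 * M 1 0 * M 2 1 * (M 0 1)⁻¹ * (M 1 2)⁻¹ * (M 2 0)⁻¹ = _
    rw [hMd 0 2, hMd 1 0, hMd 2 1, hinv 0 1, hinv 1 2, hinv 2 0]
    simp only [diagonal_mul_diagonal]
    rfl
  have hTk : ∀ k : ℕ, T ^ k = diagonal (fun a => t a ^ k) := by
    intro k; rw [hT, diagonal_pow]; rfl
  have hV1 : ∀ (r : Fin (2*n+1)) (c : Fin (n+1)), V₁ r c = t r ^ (c:ℕ) := by
    intro r c
    show ((T ^ (c:ℕ)).mulVec w) r = _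
    rw [hTk]; simp [mulVec_diagonal, w]
  have hV2 : ∀ (r : Fin (2*n+1)) (c : Fin n),
      V₂ r c = d 0 2 r * (d 1 2 r)⁻¹ * t r ^ (c:ℕ) := by
    intro r c
    show ((M 0 2 * (M 1 2)⁻¹ * T ^ (c:ℕ)).mulVec w) r = _
    rw [hTk, hMd 0 2, hinv 1 2]
    simp [diagonal_mul_diagonal, mulVec_diagonal, w]
  have hV3 : ∀ (r : Fin (2*n+1)) (c : Fin n),
      V₃ r c = d 0 1 r * (d 2 1 r)⁻¹ * t r ^ ((c:ℕ)+1) := by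
    intro r c
    show ((M 0 1 * (M 2 1)⁻¹ * T ^ ((c:ℕ)+1)).mulVec w) r = _
    rw [hTk, hMd 0 1, hinv 2 1]
    simp [diagonal_mul_diagonal, mulVec_diagonal, w]
  refine ⟨?_, ?_, ?_⟩
  · have : M 1 0 * V₂ = M 2 0 * V₃ := by
      ext r c
      have h01 : d 0 1 r ≠ 0 := hnz 0 1 r
      have h12 : d 1 2 r ≠ 0 := hnz 1 2 r
      have h20 : d 2 0 r ≠ 0 := hnz 2 0 r
      have h21 : d 2 1 r ≠ 0 := hnz 2 1 r
      rw [hMd 1 0, hMd 2 0, diagonal_mul, diagonal_mul, hV2, hV3, pow_succ]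
      generalize t r ^ (c : ℕ) = x
      simp only [ht]
      field_simp
    rw [this]
  · rw [colSpan, colSpan]
    apply Submodule.span_le.2
    rintro _ ⟨c, rfl⟩
    apply Submodule.subset_span
    refine ⟨⟨(c:ℕ)+1, by omega⟩, funext fun r => ?_⟩
    show (M 0 1 * V₁) r _ = (M 2 1 * V₃) r c
    have h21 := hnz 2 1 r
    rw [hMd 0 1, hMd 2 1, diagonal_mul, diagonal_mul, hV1, hV3]
    field_simp
    exact (mul_div_cancel_right₀ _ (show d 2 1 r ≠ 0 from h21)).symm
  · rw [colSpan, colSpan]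
    apply Submodule.span_le.2
    rintro _ ⟨c, rfl⟩
    apply Submodule.subset_span
    refine ⟨⟨(c:ℕ), by omega⟩, funext fun r => ?_⟩
    show (M 0 2 * V₁) r _ = (M 1 2 * V₂) r c
    have h12 := hnz 1 2 r
    rw [hMd 0 2, hMd 1 2, diagonal_mul, diagonal_mul, hV1, hV2]
    field_simp
    exact (mul_div_cancel_right₀ _ (show d 1 2 r ≠ 0 from h12)).symm
end
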